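/- arXiv:2309.04020 — 6 statements merged into one kernel-verified Lean document; each statement's English description precedes it below -/
import Mathlib

section
/- Fix a constraint C. A feasible mechanism f : 𝒫 → C is a group strategy-proof local priority mechanism if and only if it satisfies Unanimity, the Fixed compromiser condition, and Maskin monotonicity. -/
/- Common framework: constrained allocation, local priority mechanisms
   (Root & Ahn, "Local Priority Mechanisms"). Agents `N`, objects `O`.
   A strict preference is encoded as a `LinearOrder` on `O`, where
   `pi.lt b a` means `a` is strictly preferred to `b`. -/

open Classical

noncomputable section

variable {N O : Type}

/-- `a` is strictly preferred to `b` under `pi`. -/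
def sPref (pi : LinearOrder O) (a b : O) : Prop := pi.lt b a

/-- `a` is weakly preferred to `b` under `pi`. -/
def wPref (pi : LinearOrder O) (a b : O) : Prop := a = b ∨ pi.lt b a

/-- The favourite (top-ranked) object under `pi`. -/
def topObj [Fintype O] [Nonempty O] (pi : LinearOrder O) : O :=
  @Finset.max' O pi Finset.univ Finset.univ_nonempty

/-- `tau1 p` is the allocation assigning each agent her favourite object. -/
def tau1 [Fintype O] [Nonempty O] (p : N → LinearOrder O) : N → O :=
  fun i => topObj (p i)

/-- The strict lower contour set of `a` under `pi`, as a finset. -/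
def LCfin [Fintype O] (pi : LinearOrder O) (a : O) : Finset O :=
  Finset.univ.filter fun b => pi.lt b a

/-- The best element of the strict lower contour set of `a` (junk value `a` if empty). -/
def bestLC [Fintype O] (pi : LinearOrder O) (a : O) : O :=
  if h : (LCfin pi a).Nonempty then @Finset.max' O pi _ h else a

/-- At `x`, no local compromiser has an empty strict lower contour set. -/
def lpNoFail [Fintype O] (α : (N → O) → Set N) (p : N → LinearOrder O) (x : N → O) : Prop :=
  ∀ i ∈ α x, (LCfin (p i) (x i)).Nonempty

/-- One step of the local priority algorithm: all local compromisers move to their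
next-favourite object, everyone else stays put. -/
def lpStep [Fintype O] (α : (N → O) → Set N) (p : N → LinearOrder O) (x : N → O) : N → O :=
  fun k => if k ∈ α x then bestLC (p k) (x k) else x k

/-- The local priority algorithm for `α` at profile `p` terminates (without failure)
returning the feasible allocation `y`. -/
def lpRunsTo [Fintype O] [Nonempty O] (C : Set (N → O)) (α : (N → O) → Set N)
    (p : N → LinearOrder O) (y : N → O) : Prop :=
  ∃ (m : ℕ) (x : ℕ → N → O),
    x 0 = tau1 p ∧
    (∀ t < m, x t ∉ C ∧ lpNoFail α p (x t) ∧ x (t + 1) = lpStep α p (x t)) ∧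
    x m = y ∧ y ∈ C

/-- `α` is a local compromiser assignment for the constraint `C`. -/
def IsLCA (C : Set (N → O)) (α : (N → O) → Set N) : Prop :=
  ∀ x, (x ∉ C → (α x).Nonempty) ∧ (x ∈ C → α x = ∅)

/-- `α` is implementable: the local priority algorithm returns a feasible
allocation (never the failure symbol) on every profile. -/
def lpImplementable [Fintype O] [Nonempty O] (C : Set (N → O)) (α : (N → O) → Set N) : Prop :=
  ∀ p : N → LinearOrder O, ∃ y, lpRunsTo C α p y

/-- `α` is an implementable local compromiser assignment for `C` inducing the mechanism `f`,
i.e. `f = LP_α`. -/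
def lpInduces [Fintype O] [Nonempty O] (C : Set (N → O)) (α : (N → O) → Set N)
    (f : (N → LinearOrder O) → N → O) : Prop :=
  IsLCA C α ∧ ∀ p, lpRunsTo C α p (f p)

/-- The local priority mechanism `LP_α` (well defined whenever `α` is implementable,
since the algorithm is deterministic). -/
def LPmech [Fintype O] [Nonempty O] (C : Set (N → O)) (α : (N → O) → Set N)
    (p : N → LinearOrder O) : N → O :=
  if h : ∃ y, lpRunsTo C α p y then h.choose else fun _ => Classical.arbitrary O

/-- Group strategy-proofness. -/
def GSP (f : (N → LinearOrder O) → N → O) : Prop :=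
  ∀ (p p' : N → LinearOrder O) (M : Set N), M.Nonempty → (∀ j ∉ M, p' j = p j) →
    ¬ ((∀ j ∈ M, wPref (p j) (f p' j) (f p j)) ∧ ∃ k ∈ M, sPref (p k) (f p' k) (f p k))

/-- (Individual) strategy-proofness. -/
def StratProof (f : (N → LinearOrder O) → N → O) : Prop :=
  ∀ (p p' : N → LinearOrder O) (i : N), (∀ j, j ≠ i → p' j = p j) →
    ¬ sPref (p i) (f p' i) (f p i)

/-- Nonbossiness. -/
def Nonbossy (f : (N → LinearOrder O) → N → O) : Prop :=
  ∀ (p p' : N → LinearOrder O) (i : N), (∀ j, j ≠ i → p' j = p j) →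
    f p' i = f p i → f p' = f p

/-- Maskin monotonicity. -/
def MaskinMono (f : (N → LinearOrder O) → N → O) : Prop :=
  ∀ p p' : N → LinearOrder O,
    (∀ (i : N) (b : O), (p i).lt b (f p i) → (p' i).lt b (f p i)) → f p' = f p

/-- Unanimity. -/
def Unanimity [Fintype O] [Nonempty O] (C : Set (N → O))
    (f : (N → LinearOrder O) → N → O) : Prop :=
  ∀ p, tau1 p ∈ C → f p = tau1 p

/-- The Fixed compromiser condition. -/
def FixedComp [Fintype O] [Nonempty O] (C : Set (N → O))
    (f : (N → LinearOrder O) → N → O) : Prop :=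
  ∀ μ, μ ∉ C → ∃ i : N, ∀ p, tau1 p = μ → f p i ≠ μ i

/-- `pi'` is obtained from `pi` by moving `c` to the bottom of the ranking. -/
def MoveBottom (pi pi' : LinearOrder O) (c : O) : Prop :=
  (∀ b, b ≠ c → pi'.lt c b) ∧ (∀ a b, a ≠ c → b ≠ c → (pi'.lt a b ↔ pi.lt a b))

/-- Compromiser invariance. -/
def CompInv [Fintype O] [Nonempty O] (C : Set (N → O))
    (f : (N → LinearOrder O) → N → O) : Prop :=
  ∀ μ, μ ∉ C → ∀ p p' : N → LinearOrder O, tau1 p = μ →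
    (∀ i, (∀ q, tau1 q = μ → f q i ≠ μ i) → MoveBottom (p i) (p' i) (μ i)) →
    (∀ i, ¬ (∀ q, tau1 q = μ → f q i ≠ μ i) → p' i = p i) →
    f p' = f p

/-- Pareto efficiency relative to the constraint `C`. -/
def ParetoEff (C : Set (N → O)) (f : (N → LinearOrder O) → N → O) : Prop :=
  ∀ p, ¬ ∃ ν ∈ C, (∀ i, wPref (p i) (ν i) (f p i)) ∧ ∃ k, sPref (p k) (ν k) (f p k)

/-- `diffSet x y = d(x,y)`, the set of agents on which `x` and `y` differ. -/
def diffSet (x y : N → O) : Set N := {i | x i ≠ y i}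

/-- Forward consistency. -/
def ForwardCons (α : (N → O) → Set N) : Prop :=
  ∀ x y : N → O, diffSet x y ⊆ α x → α x \ diffSet x y ⊆ α y

/-- The sequence of allocations `z 0, …, z m` is acyclic. -/
def AcyclicSeq (z : ℕ → N → O) (m : ℕ) : Prop :=
  ∀ (i : N) (r s t : ℕ), r < s → s < t → t ≤ m → z r i = z t i → z s i = z r i

/-- `x` and `y` are `i`-connected under `α`. -/
def IConn (α : (N → O) → Set N) (i : N) (x y : N → O) : Prop :=
  ∃ m : ℕ, 1 ≤ m ∧ ∃ z : ℕ → N → O,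
    z 0 = x ∧ z m = y ∧ AcyclicSeq z m ∧ diffSet (z 0) (z 1) = {i} ∧
    ∀ l < m, diffSet (z l) (z (l + 1)) ⊆ α (z l)

/-- Backward consistency. -/
def BackCons (C : Set (N → O)) (α : (N → O) → Set N) : Prop :=
  ∀ (i : N) (x y : N → O), x ∉ C → y ∉ C → IConn α i x y →
    ∀ x' : N → O, diffSet x x' ⊆ α y → i ∉ diffSet x x' → i ∈ α x'

/-- The pointwise union of all implementable local compromiser assignments inducing `f`. -/
def alphaUnionAll [Fintype O] [Nonempty O] (C : Set (N → O))
    (f : (N → LinearOrder O) → N → O) : (N → O) → Set N :=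
  fun x => {i | ∃ β, lpInduces C β f ∧ i ∈ β x}

/- ### Auxiliary development -/

namespace RAaux

/- basic order helpers for an explicit `LinearOrder` term -/

theorem pi_irrefl (pi : LinearOrder O) (a : O) : ¬ pi.lt a a := by
  letI := pi; exact lt_irrefl a

theorem pi_asymm (pi : LinearOrder O) {a b : O} (h : pi.lt a b) : ¬ pi.lt b a := by
  letI := pi; exact lt_asymm h

theorem pi_trans (pi : LinearOrder O) {a b c : O} (h1 : pi.lt a b) (h2 : pi.lt b c) :
    pi.lt a c := by
  letI := pi; exact lt_trans h1 h2

theorem pi_trich (pi : LinearOrder O) (a b : O) : pi.lt a b ∨ a = b ∨ pi.lt b a := by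
  letI := pi; exact lt_trichotomy a b

theorem pi_ne_of_lt (pi : LinearOrder O) {a b : O} (h : pi.lt a b) : a ≠ b := by
  rintro rfl; exact pi_irrefl pi a h

/- lower contour sets and ranks -/

theorem mem_LCfin [Fintype O] (pi : LinearOrder O) {a b : O} :
    b ∈ LCfin pi a ↔ pi.lt b a := by
  simp [LCfin]

theorem LCfin_ssubset [Fintype O] (pi : LinearOrder O) {a b : O} (h : pi.lt a b) :
    LCfin pi a ⊂ LCfin pi b := by
  constructor
  · intro x hx
    exact (mem_LCfin pi).2 (pi_trans pi ((mem_LCfin pi).1 hx) h)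
  · intro hsub
    exact pi_irrefl pi a ((mem_LCfin pi).1 (hsub ((mem_LCfin pi).2 h)))

theorem rank_lt_rank [Fintype O] (pi : LinearOrder O) {a b : O} (h : pi.lt a b) :
    (LCfin pi a).card < (LCfin pi b).card :=
  Finset.card_lt_card (LCfin_ssubset pi h)

theorem lt_iff_rank [Fintype O] (pi : LinearOrder O) (a b : O) :
    pi.lt a b ↔ (LCfin pi a).card < (LCfin pi b).card := by
  constructor
  · exact rank_lt_rank pi
  · intro h
    rcases pi_trich pi a b with h1 | rfl | h1
    · exact h1
    · omega
    · exact absurd (rank_lt_rank pi h1) (by omega)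

theorem rank_lt_card [Fintype O] (pi : LinearOrder O) (a : O) :
    (LCfin pi a).card < Fintype.card O := by
  have : LCfin pi a ⊂ Finset.univ := by
    constructor
    · exact Finset.subset_univ _
    · intro hsub
      exact pi_irrefl pi a ((mem_LCfin pi).1 (hsub (Finset.mem_univ a)))
  simpa using Finset.card_lt_card this

/- bestLC -/

theorem bestLC_lt [Fintype O] (pi : LinearOrder O) {a : O} (h : (LCfin pi a).Nonempty) :
    pi.lt (bestLC pi a) a := by
  rw [bestLC, dif_pos h]
  exact (mem_LCfin pi).1 (@Finset.max'_mem O pi _ h)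

theorem bestLC_wle [Fintype O] (pi : LinearOrder O) (a : O) :
    bestLC pi a = a ∨ pi.lt (bestLC pi a) a := by
  by_cases h : (LCfin pi a).Nonempty
  · exact Or.inr (bestLC_lt pi h)
  · rw [bestLC, dif_neg h]; exact Or.inl rfl

theorem le_bestLC [Fintype O] (pi : LinearOrder O) {a b : O} (h : pi.lt b a) :
    b = bestLC pi a ∨ pi.lt b (bestLC pi a) := by
  have hne : (LCfin pi a).Nonempty := ⟨b, (mem_LCfin pi).2 h⟩
  rw [bestLC, dif_pos hne]
  letI := pi
  exact ((Finset.le_max' _ b ((mem_LCfin pi).2 h)).lt_or_eq).symm.imp id (fun h => h)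

/- topObj -/

theorem le_topObj [Fintype O] [Nonempty O] (pi : LinearOrder O) (a : O) :
    a = topObj pi ∨ pi.lt a (topObj pi) := by
  letI := pi
  exact ((Finset.le_max' Finset.univ a (Finset.mem_univ a)).lt_or_eq).symm.imp id (fun h => h)

theorem topObj_eq [Fintype O] [Nonempty O] (pi : LinearOrder O) {c : O}
    (h : ∀ b, b = c ∨ pi.lt b c) : topObj pi = c := by
  letI := pi
  refine le_antisymm (Finset.max'_le _ _ _ fun b _ => ?_)
    (Finset.le_max' _ _ (Finset.mem_univ c))
  rcases h b with rfl | hb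
  · exact le_rfl
  · exact le_of_lt hb

/- moveTop: the linear order obtained from `pi` by moving `c` to the top. -/

def moveTopKey [Fintype O] (pi : LinearOrder O) (c a : O) : ℕ :=
  if a = c then Fintype.card O else (LCfin pi a).card

theorem moveTopKey_inj [Fintype O] (pi : LinearOrder O) (c : O) :
    Function.Injective (moveTopKey pi c) := by
  intro a b hab
  unfold moveTopKey at hab
  by_cases ha : a = c <;> by_cases hb : b = c
  · rw [ha, hb]
  · rw [if_pos ha, if_neg hb] at hab
    exact absurd hab.symm (Nat.ne_of_lt (rank_lt_card pi b))
  · rw [if_neg ha, if_pos hb] at hab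
    exact absurd hab (Nat.ne_of_lt (rank_lt_card pi a))
  · rw [if_neg ha, if_neg hb] at hab
    rcases pi_trich pi a b with h | h | h
    · exact absurd ((lt_iff_rank pi a b).1 h) (by omega)
    · exact h
    · exact absurd ((lt_iff_rank pi b a).1 h) (by omega)

def moveTop [Fintype O] (pi : LinearOrder O) (c : O) : LinearOrder O :=
  LinearOrder.lift' (moveTopKey pi c) (moveTopKey_inj pi c)

theorem moveTop_lt_iff [Fintype O] (pi : LinearOrder O) (c a b : O) :
    (moveTop pi c).lt a b ↔ moveTopKey pi c a < moveTopKey pi c b := by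
  constructor
  · intro h; exact h
  · intro h; exact h

theorem moveTop_lt_c [Fintype O] (pi : LinearOrder O) {c b : O} (h : b ≠ c) :
    (moveTop pi c).lt b c := by
  rw [moveTop_lt_iff]
  unfold moveTopKey
  rw [if_neg h, if_pos rfl]
  exact rank_lt_card pi b

theorem moveTop_top [Fintype O] [Nonempty O] (pi : LinearOrder O) (c : O) :
    topObj (moveTop pi c) = c := by
  apply topObj_eq
  intro b
  by_cases hb : b = c
  · exact Or.inl hb
  · exact Or.inr (moveTop_lt_c pi hb)

/-- Key preservation lemma: if `d` is weakly below `c` moving `c` to the top keeps the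
strict lower contour of `d`. -/
theorem moveTop_keep [Fintype O] (pi : LinearOrder O) {c d b : O}
    (hw : d = c ∨ pi.lt d c) (hb : pi.lt b d) : (moveTop pi c).lt b d := by
  rcases hw with rfl | hdc
  · exact moveTop_lt_c pi (pi_ne_of_lt pi hb)
  · have hd : d ≠ c := pi_ne_of_lt pi hdc
    have hbc : b ≠ c := by
      rintro rfl
      exact pi_asymm pi (pi_trans pi hb hdc) (pi_trans pi hb hdc)
    rw [moveTop_lt_iff]
    unfold moveTopKey
    rw [if_neg hbc, if_neg hd]
    exact (lt_iff_rank pi b d).1 hb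

/- ### Maskin monotonicity implies group strategy-proofness -/

theorem gsp_of_mm [Fintype O] (f : (N → LinearOrder O) → N → O) (hMM : MaskinMono f) :
    GSP f := by
  intro p p' M hM hout
  rintro ⟨hw, k, hkM, hks⟩
  set q : N → LinearOrder O := fun j => if j ∈ M then moveTop (p j) (f p' j) else p j with hq
  have hqy : f q = f p' := by
    apply hMM
    intro i b hb
    by_cases hi : i ∈ M
    · rw [show q i = moveTop (p i) (f p' i) by simp only [hq, if_pos hi]]
      exact moveTop_lt_c (p i) (pi_ne_of_lt (p' i) hb)
    · rw [show q i = p i by simp only [hq, if_neg hi]]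
      rw [← hout i hi]; exact hb
  have hqx : f q = f p := by
    apply hMM
    intro i b hb
    by_cases hi : i ∈ M
    · rw [show q i = moveTop (p i) (f p' i) by simp only [hq, if_pos hi]]
      refine moveTop_keep (p i) ?_ hb
      rcases hw i hi with h | h
      · exact Or.inl h.symm
      · exact Or.inr h
    · rw [show q i = p i by simp only [hq, if_neg hi]]
      exact hb
  have : f p' k = f p k := by rw [← hqy, hqx]
  rw [this] at hks
  exact pi_irrefl (p k) _ hks

/- ### Group strategy-proofness implies Maskin monotonicity -/

theorem sp_of_gsp (f : (N → LinearOrder O) → N → O) (h : GSP f) : StratProof f := by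
  intro p p' i hout hs
  exact h p p' {i} ⟨i, rfl⟩ (fun j hj => hout j hj)
    ⟨fun j hj => by rw [Set.mem_singleton_iff] at hj; subst hj; exact Or.inr hs,
     i, rfl, hs⟩

theorem nb_of_gsp (f : (N → LinearOrder O) → N → O) (h : GSP f) : Nonbossy f := by
  intro p p' i hout hfi
  by_contra hne
  have : ∃ j, f p' j ≠ f p j := by
    by_contra hc
    push_neg at hc
    exact hne (funext hc)
  obtain ⟨j, hj⟩ := this
  have hji : j ≠ i := by rintro rfl; exact hj hfi
  rcases pi_trich (p j) (f p' j) (f p j) with hlt | heq | hlt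
  · -- at p', coalition {i,j} deviates to p
    refine h p' p {i, j} ⟨i, Or.inl rfl⟩ (fun l hl => ?_) ⟨fun l hl => ?_, j, Or.inr rfl, ?_⟩
    · exact (hout l (fun h => hl (Or.inl h))).symm
    · by_cases hli : l = i
      · rw [hli]; exact Or.inl hfi.symm
      · have hlj : l = j := hl.resolve_left hli
        rw [hlj, hout j hji]
        exact Or.inr hlt
    · show (p' j).lt (f p' j) (f p j)
      rw [hout j hji]; exact hlt
  · exact hj heq
  · -- at p, coalition {i,j} deviates to p'
    exact h p p' {i, j} ⟨i, Or.inl rfl⟩ (fun l hl => hout l (fun h => hl (Or.inl h)))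
      ⟨fun l hl => by
        rcases hl with rfl | rfl
        · exact Or.inl hfi
        · exact Or.inr hlt,
       j, Or.inr rfl, hlt⟩

theorem update_step (f : (N → LinearOrder O) → N → O) (hSP : StratProof f)
    (hNB : Nonbossy f) (q : N → LinearOrder O) (a : N) (pia : LinearOrder O)
    (h : ∀ b, (q a).lt b (f q a) → pia.lt b (f q a)) :
    f (Function.update q a pia) = f q := by
  classical
  set q' := Function.update q a pia with hq'
  have hout : ∀ j, j ≠ a → q' j = q j := by
    intro j hj; simp [hq', Function.update_of_ne hj]
  have h1 : ¬ (q a).lt (f q a) (f q' a) := hSP q q' a hout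
  have h2 : ¬ (q' a).lt (f q' a) (f q a) := by
    have hout' : ∀ j, j ≠ a → q j = q' j := fun j hj => (hout j hj).symm
    exact hSP q' q a hout'
  have hqa : q' a = pia := by simp [hq']
  rcases pi_trich (q a) (f q' a) (f q a) with hlt | heq | hlt
  · exact absurd (by rw [hqa]; exact h _ hlt) h2
  · exact hNB q q' a hout heq
  · exact absurd hlt h1

theorem mm_of_gsp [Fintype N] (f : (N → LinearOrder O) → N → O) (h : GSP f) :
    MaskinMono f := by
  classical
  have hSP := sp_of_gsp f h
  have hNB := nb_of_gsp f h
  intro p p' hmono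
  have key : ∀ S : Finset N, f (fun i => if i ∈ S then p' i else p i) = f p := by
    intro S
    induction S using Finset.induction_on with
    | empty => simp
    | @insert a s ha ih =>
      set q' : N → LinearOrder O := fun i => if i ∈ s then p' i else p i with hq'def
      have heq : (fun i => if i ∈ insert a s then p' i else p i)
          = Function.update q' a (p' a) := by
        funext i
        by_cases hia : i = a
        · subst hia; simp [hq'def, Function.update_self]
        · simp [hq'def, Function.update_of_ne hia, Finset.mem_insert, hia]
      rw [heq]
      rw [update_step f hSP hNB q' a (p' a) ?_]
      · exact ih
      · intro b hb
        have hq'a : q' a = p a := by simp [hq'def, ha]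
        rw [hq'a] at hb
        rw [ih] at hb ⊢
        exact hmono a b hb
  have := key Finset.univ
  simpa using this

/- ### Local priority mechanisms satisfy Unanimity and the Fixed compromiser condition -/

theorem unanimity_of_induces [Fintype O] [Nonempty O] (C : Set (N → O))
    (α : (N → O) → Set N) (f : (N → LinearOrder O) → N → O)
    (h : lpInduces C α f) : Unanimity C f := by
  intro p hp
  obtain ⟨m, x, hx0, hstep, hxm, _⟩ := h.2 p
  rcases Nat.eq_zero_or_pos m with rfl | hm
  · rw [← hxm, hx0]
  · exact absurd (hx0 ▸ (hstep 0 hm).1) (by simp [hp])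

theorem fixedcomp_of_induces [Fintype O] [Nonempty O] (C : Set (N → O))
    (α : (N → O) → Set N) (f : (N → LinearOrder O) → N → O)
    (h : lpInduces C α f) : FixedComp C f := by
  intro μ hμ
  obtain ⟨i, hi⟩ := (h.1 μ).1 hμ
  refine ⟨i, fun p hp => ?_⟩
  obtain ⟨m, x, hx0, hstep, hxm, hyC⟩ := h.2 p
  have hx0μ : x 0 = μ := hx0.trans hp
  have hm : 1 ≤ m := by
    rcases Nat.eq_zero_or_pos m with rfl | hm
    · exact absurd (by rw [← hx0μ, hxm]; exact hyC : μ ∈ C) hμ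
    · exact hm
  -- first step is strict for agent i
  obtain ⟨_, hnf, hs1⟩ := hstep 0 hm
  have hiα : i ∈ α (x 0) := by rw [hx0μ]; exact hi
  have hlc : (LCfin (p i) (x 0 i)).Nonempty := hnf i hiα
  have hx1 : x 1 i = bestLC (p i) (x 0 i) := by
    rw [hs1]; simp [lpStep, hiα]
  have hstrict : (p i).lt (x 1 i) (μ i) := by
    rw [hx1, ← hx0μ]; exact bestLC_lt (p i) hlc
  -- the object of i weakly decreases from step 1 on
  have hmono : ∀ t, 1 ≤ t → t ≤ m → x t i = x 1 i ∨ (p i).lt (x t i) (x 1 i) := by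
    intro t
    induction t with
    | zero => omega
    | succ s ih =>
      intro _ hsm
      rcases Nat.eq_zero_or_pos s with rfl | hs1'
      · exact Or.inl rfl
      · have hprev := ih hs1' (by omega)
        obtain ⟨_, hnf', hs'⟩ := hstep s (by omega)
        have hstepv : x (s+1) i = lpStep α p (x s) i := by rw [hs']
        rw [hstepv]
        unfold lpStep
        by_cases hiαs : i ∈ α (x s)
        · rw [if_pos hiαs]
          rcases bestLC_wle (p i) (x s i) with heq | hlt
          · rw [heq]; exact hprev
          · rcases hprev with heq' | hlt'
            · exact Or.inr (heq' ▸ hlt)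
            · exact Or.inr (pi_trans (p i) hlt hlt')
        · rw [if_neg hiαs]; exact hprev
  have hfin : x m i = x 1 i ∨ (p i).lt (x m i) (x 1 i) := hmono m hm le_rfl
  have : (p i).lt (x m i) (μ i) := by
    rcases hfin with heq | hlt
    · rw [heq]; exact hstrict
    · exact pi_trans (p i) hlt hstrict
  rw [← hxm]
  exact pi_ne_of_lt (p i) this

/- ### The construction: Unanimity + FixedComp + Maskin mono give a local priority
mechanism -/

/-- The canonical local compromiser assignment built from `f`. -/
def alphaOf [Fintype O] [Nonempty O] (C : Set (N → O))
    (f : (N → LinearOrder O) → N → O) : (N → O) → Set N :=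
  fun x => if x ∈ C then ∅ else {i | ∀ q, tau1 q = x → f q i ≠ x i}

theorem mem_alphaOf [Fintype O] [Nonempty O] {C : Set (N → O)}
    {f : (N → LinearOrder O) → N → O} {x : N → O} (hx : x ∉ C) {i : N} :
    i ∈ alphaOf C f x ↔ ∀ q, tau1 q = x → f q i ≠ x i := by
  simp [alphaOf, hx]

/-- The run of the local priority algorithm (staying put once feasible). -/
def lpSeq [Fintype O] [Nonempty O] (C : Set (N → O)) (α : (N → O) → Set N)
    (p : N → LinearOrder O) : ℕ → N → O
  | 0 => tau1 p
  | t + 1 =>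
      if lpSeq C α p t ∈ C then lpSeq C α p t else lpStep α p (lpSeq C α p t)

theorem moveTop_profile [Fintype N] [Fintype O] [Nonempty O]
    (f : (N → LinearOrder O) → N → O) (hMM : MaskinMono f)
    (p : N → LinearOrder O) (x : N → O)
    (hinv : ∀ i, x i = f p i ∨ (p i).lt (f p i) (x i)) :
    tau1 (fun i => moveTop (p i) (x i)) = x ∧ f (fun i => moveTop (p i) (x i)) = f p := by
  constructor
  · funext i
    exact moveTop_top (p i) (x i)
  · apply hMM
    intro i b hb
    refine moveTop_keep (p i) ?_ hb
    rcases hinv i with heq | hlt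
    · exact Or.inl heq.symm
    · exact Or.inr hlt

theorem induces_of [Fintype N] [Fintype O] [Nonempty O] (C : Set (N → O))
    (f : (N → LinearOrder O) → N → O)
    (hU : Unanimity C f) (hFC : FixedComp C f) (hMM : MaskinMono f) :
    lpInduces C (alphaOf C f) f := by
  set α := alphaOf C f with hα
  have hLCA : IsLCA C α := by
    intro x
    constructor
    · intro hx
      obtain ⟨i, hi⟩ := hFC x hx
      exact ⟨i, (mem_alphaOf hx).2 hi⟩
    · intro hx
      simp [hα, alphaOf, hx]
  refine ⟨hLCA, fun p => ?_⟩
  set s := lpSeq C α p with hs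
  -- the invariant
  have hinv : ∀ t, ∀ i, s t i = f p i ∨ (p i).lt (f p i) (s t i) := by
    intro t
    induction t with
    | zero =>
      intro i
      have : s 0 i = topObj (p i) := rfl
      rw [this]
      exact (le_topObj (p i) (f p i)).imp Eq.symm id
    | succ t ih =>
      intro i
      by_cases hC : s t ∈ C
      · have : s (t+1) = s t := by rw [hs]; simp [lpSeq, show lpSeq C α p t ∈ C from hC]
        rw [this]; exact ih i
      · have hstep : s (t+1) = lpStep α p (s t) := by rw [hs]; simp [lpSeq, show lpSeq C α p t ∉ C from hC]
        rw [hstep]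
        unfold lpStep
        by_cases hiα : i ∈ α (s t)
        · rw [if_pos hiα]
          -- f p i is strictly below s t i
          have hne : f p i ≠ s t i := by
            obtain ⟨htau, hfq⟩ := moveTop_profile f hMM p (s t) ih
            have := ((mem_alphaOf hC).1 hiα) _ htau
            rw [hfq] at this
            exact this
          have hlt : (p i).lt (f p i) (s t i) := (ih i).resolve_left
            (fun h => hne h.symm)
          rcases le_bestLC (p i) hlt with heq | hlt'
          · exact Or.inl heq.symm
          · exact Or.inr hlt'
        · rw [if_neg hiα]; exact ih i
  -- strictness and no-failure at infeasible states
  have hstrict : ∀ t, s t ∉ C → ∀ i ∈ α (s t), (p i).lt (f p i) (s t i) := by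
    intro t hC i hiα
    obtain ⟨htau, hfq⟩ := moveTop_profile f hMM p (s t) (hinv t)
    have hne := ((mem_alphaOf hC).1 hiα) _ htau
    rw [hfq] at hne
    exact (hinv t i).resolve_left (fun h => hne h.symm)
  have hnofail : ∀ t, s t ∉ C → lpNoFail α p (s t) := by
    intro t hC i hiα
    exact ⟨f p i, (mem_LCfin (p i)).2 (hstrict t hC i hiα)⟩
  -- potential argument: termination
  have hpot : ∀ t, s t ∉ C →
      (∑ i, (LCfin (p i) (s (t+1) i)).card) < ∑ i, (LCfin (p i) (s t i)).card := by
    intro t hC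
    have hstep : s (t+1) = lpStep α p (s t) := by rw [hs]; simp [lpSeq, show lpSeq C α p t ∉ C from hC]
    obtain ⟨i0, hi0⟩ := (hLCA (s t)).1 hC
    refine Finset.sum_lt_sum (fun i _ => ?_) ⟨i0, Finset.mem_univ i0, ?_⟩
    · rw [hstep]
      unfold lpStep
      by_cases hiα : i ∈ α (s t)
      · rw [if_pos hiα]
        have := bestLC_lt (p i) (hnofail t hC i hiα)
        exact le_of_lt (rank_lt_rank (p i) this)
      · rw [if_neg hiα]
    · rw [hstep]
      unfold lpStep
      rw [if_pos hi0]
      exact rank_lt_rank (p i0) (bestLC_lt (p i0) (hnofail t hC i0 hi0))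
  have hterm : ∃ t, s t ∈ C := by
    by_contra hc
    push_neg at hc
    have key : ∀ t, (∑ i, (LCfin (p i) (s t i)).card) + t
        ≤ ∑ i, (LCfin (p i) (s 0 i)).card := by
      intro t
      induction t with
      | zero => omega
      | succ t ih =>
        have := hpot t (hc t)
        omega
    have := key ((∑ i, (LCfin (p i) (s 0 i)).card) + 1)
    omega
  -- the run
  set m := Nat.find hterm with hm
  have hmC : s m ∈ C := Nat.find_spec hterm
  have hmlt : ∀ t < m, s t ∉ C := fun t ht => Nat.find_min hterm ht
  -- terminal value equals f p
  have hfinal : f p = s m := by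
    obtain ⟨htau, hfq⟩ := moveTop_profile f hMM p (s m) (hinv m)
    have := hU _ (htau ▸ hmC)
    rw [hfq, htau] at this
    exact this
  refine ⟨m, s, rfl, fun t ht => ⟨hmlt t ht, hnofail t (hmlt t ht), ?_⟩, hfinal.symm, by
    rw [hfinal]; exact hmC⟩
  rw [hs]
  simp [lpSeq, show lpSeq C α p t ∉ C from hmlt t ht]

end RAaux

end

/-- Corollary 1: `f` is a group strategy-proof local priority mechanism
iff it satisfies Unanimity, the Fixed compromiser condition, and Maskin monotonicity. -/
theorem gsp_localPriority_characterization
    {N O : Type} [Fintype N] [Fintype O] [Nonempty O]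
    (C : Set (N → O)) (hC : C.Nonempty)
    (f : (N → LinearOrder O) → N → O) (hf : ∀ p, f p ∈ C) :
    (GSP f ∧ ∃ α, lpInduces C α f) ↔
      (Unanimity C f ∧ FixedComp C f ∧ MaskinMono f) := by
  constructor
  · rintro ⟨hGSP, α, hind⟩
    exact ⟨RAaux.unanimity_of_induces C α f hind, RAaux.fixedcomp_of_induces C α f hind,
      RAaux.mm_of_gsp f hGSP⟩
  · rintro ⟨hU, hFC, hMM⟩
    exact ⟨RAaux.gsp_of_mm f hMM, RAaux.alphaOf C f, RAaux.induces_of C f hU hFC hMM⟩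
end

section
/- Fix any constraint C and any bijection σ : {1,…,n} → N. Define α by α(μ) = ∅ for feasible μ, and α(μ) = {σ(r)} for infeasible μ, where r is the smallest index such that the restriction of μ to {σ(1),…,σ(r)} has no feasible complete extension. Then α is an implementable local compromiser assignment for C and LP_α equals the serial dictatorship for σ; in particular, for every constraint the serial dictatorship is a local priority mechanism. -/
/- Common framework: constrained allocation, local priority mechanisms
   (Root & Ahn, "Local Priority Mechanisms"). Agents `N`, objects `O`.
   A strict preference is encoded as a `LinearOrder` on `O`, where
   `pi.lt b a` means `a` is strictly preferred to `b`. -/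

open Classical

section SDaux

variable {N O : Type}

/-- Auxiliary: the restriction of `μ` to the first `r+1` dictators has a feasible
complete extension. -/
def SDExt (C : Set (N → O)) {n : ℕ} (σ : Fin n ≃ N) (μ : N → O) (r : Fin n) : Prop :=
  ∃ z ∈ C, ∀ l : Fin n, l ≤ r → z (σ l) = μ (σ l)

lemma SDExt.antitone {C : Set (N → O)} {n : ℕ} {σ : Fin n ≃ N} {μ : N → O} {r l : Fin n}
    (h : SDExt C σ μ r) (hl : l ≤ r) : SDExt C σ μ l := by
  obtain ⟨z, hz, hzl⟩ := h
  exact ⟨z, hz, fun l' hl' => hzl l' (hl'.trans hl)⟩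

lemma topObj_wPref [Fintype O] [Nonempty O] (pi : LinearOrder O) (b : O) :
    wPref pi (topObj pi) b := by
  letI := pi
  have hle : b ≤ topObj pi := Finset.le_max' Finset.univ b (Finset.mem_univ b)
  rcases eq_or_lt_of_le hle with h | h
  · exact Or.inl h.symm
  · exact Or.inr h

lemma bestLC_spec [Fintype O] (pi : LinearOrder O) {a b : O} (h : pi.lt b a) :
    (LCfin pi a).Nonempty ∧ pi.lt (bestLC pi a) a ∧ (bestLC pi a = b ∨ pi.lt b (bestLC pi a)) := by
  letI := pi
  have hb : b ∈ LCfin pi a := by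
    simp only [LCfin, Finset.mem_filter, Finset.mem_univ, true_and]
    exact h
  have hne : (LCfin pi a).Nonempty := ⟨b, hb⟩
  have hbest : bestLC pi a = (LCfin pi a).max' hne := by
    rw [bestLC, dif_pos hne]
  have h1 : bestLC pi a ∈ LCfin pi a := by
    rw [hbest]; exact Finset.max'_mem _ _
  have h2 : b ≤ bestLC pi a := by
    rw [hbest]; exact Finset.le_max' _ _ hb
  refine ⟨hne, ?_, ?_⟩
  · have := Finset.mem_filter.1 h1
    exact this.2
  · rcases eq_or_lt_of_le h2 with h' | h'
    · exact Or.inl h'.symm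
    · exact Or.inr h'

lemma LCfin_card_lt [Fintype O] (pi : LinearOrder O) {a c : O} (h : pi.lt c a) :
    (LCfin pi c).card < (LCfin pi a).card := by
  letI := pi
  apply Finset.card_lt_card
  constructor
  · intro y hy
    simp only [LCfin, Finset.mem_filter, Finset.mem_univ, true_and] at hy ⊢
    exact lt_trans hy h
  · intro hsub
    have hc : c ∈ LCfin pi a := by
      simp only [LCfin, Finset.mem_filter, Finset.mem_univ, true_and]
      exact h
    have := hsub hc
    simp only [LCfin, Finset.mem_filter, Finset.mem_univ, true_and] at this
    exact absurd this (lt_irrefl c)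

end SDaux

/-- serial dictatorship is a local priority mechanism, for every
constraint `C` and every ordering `σ` of the agents.  Here `α` assigns to each
infeasible `μ` the singleton `{σ r}` for the least `r` such that the restriction of
`μ` to `{σ 0, …, σ r}` has no feasible complete extension, and `f` is the serial
dictatorship for `σ`: each dictator `σ r` in turn receives her favourite object among
those she gets in some feasible complete extension of the earlier dictators' picks. -/
theorem serialDictatorship_isLocalPriority
    {N O : Type} [Fintype N] [Fintype O] [Nonempty O]
    (C : Set (N → O)) (hC : C.Nonempty)
    (n : ℕ) (σ : Fin n ≃ N)
    (α : (N → O) → Set N)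
    (hα0 : ∀ μ ∈ C, α μ = ∅)
    (hα1 : ∀ μ, μ ∉ C → ∀ r : Fin n,
      (∀ r' : Fin n, r' < r → ∃ z ∈ C, ∀ l : Fin n, l ≤ r' → z (σ l) = μ (σ l)) →
      ¬ (∃ z ∈ C, ∀ l : Fin n, l ≤ r → z (σ l) = μ (σ l)) →
      α μ = {σ r})
    (f : (N → LinearOrder O) → N → O)
    (hfC : ∀ p, f p ∈ C)
    (hf : ∀ (p : N → LinearOrder O) (r : Fin n), ∀ z ∈ C,
      (∀ l : Fin n, l < r → z (σ l) = f p (σ l)) →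
      ¬ sPref (p (σ r)) (z (σ r)) (f p (σ r))) :
    lpInduces C α f := by
  -- Minimal failing index lemma
  have keyα : ∀ μ, μ ∉ C → ∃ r : Fin n,
      (∀ l, l < r → SDExt C σ μ l) ∧ ¬ SDExt C σ μ r ∧ α μ = {σ r} := by
    intro μ hμ
    obtain ⟨z0, hz0⟩ := hC
    have hn : n ≠ 0 := by
      rintro rfl
      have : μ = z0 := funext fun i => (σ.symm i).elim0
      exact hμ (this ▸ hz0)
    have hlast : ¬ SDExt C σ μ ⟨n - 1, by omega⟩ := by
      rintro ⟨z, hz, hzl⟩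
      have hzeq : z = μ := funext fun i => by
        have hle : σ.symm i ≤ (⟨n - 1, by omega⟩ : Fin n) := by
          have := (σ.symm i).isLt
          exact Fin.mk_le_mk.mpr (by omega) |>.trans_eq rfl
        have := hzl (σ.symm i) hle
        simpa using this
      exact hμ (hzeq ▸ hz)
    obtain ⟨r, hr, hrmin⟩ := wellFounded_lt.has_min {r : Fin n | ¬ SDExt C σ μ r} ⟨_, hlast⟩
    have hmin : ∀ l, l < r → SDExt C σ μ l := by
      intro l hl
      by_contra h
      exact hrmin l h hl
    exact ⟨r, hmin, hr, hα1 μ hμ r (fun r' h => hmin r' h) hr⟩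
  constructor
  · -- IsLCA
    intro x
    constructor
    · intro hx
      obtain ⟨r, _, _, hαx⟩ := keyα x hx
      rw [hαx]
      exact ⟨σ r, rfl⟩
    · exact hα0 x
  · -- LP runs to f p
    intro p
    set g := f p with hg
    -- Lemma 1
    have lem1 : ∀ (x : N → O) (l : Fin n), SDExt C σ x l →
        (∀ l', l' < l → x (σ l') = g (σ l')) →
        wPref (p (σ l)) (x (σ l)) (g (σ l)) → x (σ l) = g (σ l) := by
      rintro x l ⟨z, hz, hzl⟩ hpre hw
      have hzs : ∀ l', l' < l → z (σ l') = g (σ l') :=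
        fun l' h => (hzl l' h.le).trans (hpre l' h)
      have hns := hf p l z hz hzs
      rw [hzl l le_rfl] at hns
      rcases hw with h | h
      · exact h
      · exact absurd h hns
    -- Lemma 2 (strong induction)
    have lem2 : ∀ x : N → O, (∀ l, wPref (p (σ l)) (x (σ l)) (g (σ l))) →
        ∀ l : Fin n, SDExt C σ x l → x (σ l) = g (σ l) := by
      intro x hw
      have H : ∀ k : ℕ, ∀ l : Fin n, l.val ≤ k → SDExt C σ x l → x (σ l) = g (σ l) := by
        intro k
        induction k with
        | zero =>
          intro l hl hext
          refine lem1 x l hext ?_ (hw l)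
          intro l' hl'
          have := Fin.lt_def.mp hl'
          omega
        | succ k ih =>
          intro l hl hext
          refine lem1 x l hext ?_ (hw l)
          intro l' hl'
          have hv := Fin.lt_def.mp hl'
          exact ih l' (by omega) (hext.antitone hl'.le)
      exact fun l hext => H l.val l le_rfl hext
    -- Feasible + invariant ⇒ equals f p
    have feas_eq : ∀ x : N → O, x ∈ C →
        (∀ l, wPref (p (σ l)) (x (σ l)) (g (σ l))) → x = g := by
      intro x hx hw
      funext i
      have := lem2 x hw (σ.symm i) ⟨x, hx, fun _ _ => rfl⟩
      simpa using this
    -- One step preserves everything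
    have step : ∀ x : N → O, x ∉ C → (∀ l, wPref (p (σ l)) (x (σ l)) (g (σ l))) →
        lpNoFail α p x ∧
        (∀ l, wPref (p (σ l)) (lpStep α p x (σ l)) (g (σ l))) ∧
        (∑ i, (LCfin (p i) (lpStep α p x i)).card) < ∑ i, (LCfin (p i) (x i)).card := by
      intro x hx hw
      obtain ⟨r, hmin, hfail, hαx⟩ := keyα x hx
      have hpre : ∀ l, l < r → x (σ l) = g (σ l) := fun l hl => lem2 x hw l (hmin l hl)
      have hne : x (σ r) ≠ g (σ r) := by
        intro he
        refine hfail ⟨g, hfC p, fun l hl => ?_⟩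
        rcases hl.lt_or_eq with h | h
        · exact (hpre l h).symm
        · rw [h]; exact he.symm
      have hlt : (p (σ r)).lt (g (σ r)) (x (σ r)) := by
        rcases hw r with h | h
        · exact absurd h hne
        · exact h
      obtain ⟨hLCne, hblt, hbw⟩ := bestLC_spec (p (σ r)) hlt
      have hstep_r : lpStep α p x (σ r) = bestLC (p (σ r)) (x (σ r)) := by
        simp [lpStep, hαx]
      have hstep_o : ∀ k, k ≠ σ r → lpStep α p x k = x k := by
        intro k hk
        simp [lpStep, hαx, hk]
      refine ⟨?_, ?_, ?_⟩
      · intro i hi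
        rw [hαx] at hi
        rcases hi with rfl
        exact hLCne
      · intro l
        by_cases hl : σ l = σ r
        · have : l = r := σ.injective hl
          subst this
          rw [hstep_r]
          exact hbw
        · rw [hstep_o _ hl]
          exact hw l
      · have hcard : (LCfin (p (σ r)) (lpStep α p x (σ r))).card <
            (LCfin (p (σ r)) (x (σ r))).card := by
          rw [hstep_r]
          exact LCfin_card_lt _ hblt
        apply Finset.sum_lt_sum
        · intro i _
          by_cases h : i = σ r
          · subst h; exact hcard.le
          · rw [hstep_o i h]
        · exact ⟨σ r, Finset.mem_univ _, hcard⟩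
    -- The algorithm's sequence
    set seq : ℕ → N → O :=
      fun t => Nat.rec (tau1 p) (fun _ xt => if xt ∈ C then xt else lpStep α p xt) t with hseq
    have seq0 : seq 0 = tau1 p := rfl
    have seqS : ∀ t, seq (t + 1) = if seq t ∈ C then seq t else lpStep α p (seq t) :=
      fun t => rfl
    have hInv : ∀ t, ∀ l, wPref (p (σ l)) (seq t (σ l)) (g (σ l)) := by
      intro t
      induction t with
      | zero => intro l; exact topObj_wPref _ _
      | succ t ih =>
        rw [seqS t]
        by_cases h : seq t ∈ C
        · rw [if_pos h]; exact ih
        · rw [if_neg h]; exact (step _ h ih).2.1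
    have hterm : ∃ t, seq t ∈ C := by
      by_contra h
      push_neg at h
      have hdec : ∀ t, (∑ i, (LCfin (p i) (seq (t + 1) i)).card) <
          ∑ i, (LCfin (p i) (seq t i)).card := by
        intro t
        rw [seqS t, if_neg (h t)]
        exact (step _ (h t) (hInv t)).2.2
      have hb : ∀ t, (∑ i, (LCfin (p i) (seq t i)).card) + t ≤
          ∑ i, (LCfin (p i) (seq 0 i)).card := by
        intro t
        induction t with
        | zero => simp
        | succ t ih => have := hdec t; omega
      have := hb ((∑ i, (LCfin (p i) (seq 0 i)).card) + 1)
      omega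
    refine ⟨Nat.find hterm, seq, seq0, ?_, ?_, hfC p⟩
    · intro t ht
      have hnc : seq t ∉ C := Nat.find_min hterm ht
      exact ⟨hnc, (step _ hnc (hInv t)).1, by rw [seqS t, if_neg hnc]⟩
    · exact feas_eq (seq (Nat.find hterm)) (Nat.find_spec hterm) (hInv _)
end

section
/- In any school choice problem, define α(x) = {i ∈ N : |{j ∈ N : x_j = x_i and j >_{x_i} i}| ≥ q_{x_i}} for every allocation x. Then α is an implementable local compromiser assignment for the school choice constraint C and LP_α = DA; in particular, the deferred acceptance mechanism for school choice is a local priority mechanism. -/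
/- Common framework: constrained allocation, local priority mechanisms
   (Root & Ahn, "Local Priority Mechanisms"). Agents `N`, objects `O`.
   A strict preference is encoded as a `LinearOrder` on `O`, where
   `pi.lt b a` means `a` is strictly preferred to `b`. -/

open Classical

noncomputable section

variable {N O : Type}

/-- The school choice constraint: no school is over its capacity. -/
def SchoolC [Fintype O] (q : O → ℕ) : Set (N → O) :=
  {μ | ∀ s : O, Set.ncard {i : N | μ i = s} ≤ q s}

/-- In the cumulative deferred acceptance algorithm, with cumulative rejection set `R`,
student `i` applies to her favourite school that has not yet rejected her. -/
def daApp [Fintype O] [Nonempty O] (p : N → LinearOrder O) (R : Set (N × O)) (i : N) : O :=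
  if h : (Finset.univ.filter fun s : O => (i, s) ∉ R).Nonempty
  then @Finset.max' O (p i) _ h else Classical.arbitrary O

/-- The rejections of the current round: `i` is rejected by the school `s` she applies
to if at least `q s` students with higher `>_s`-priority also apply to `s` this round. -/
def daRej [Fintype O] [Nonempty O] (q : O → ℕ) (pr : O → LinearOrder N)
    (p : N → LinearOrder O) (R : Set (N × O)) : Set (N × O) :=
  {is : N × O | daApp p R is.1 = is.2 ∧
    q is.2 ≤ Set.ncard {j : N | daApp p R j = is.2 ∧ (pr is.2).lt is.1 j}}

/-- The cumulative deferred acceptance algorithm at profile `p` terminates with the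
allocation `μ`: rejections accumulate round by round until a round with no rejections,
and `μ` assigns each student to the school she applies to in that round. -/
def DARuns [Fintype O] [Nonempty O] (q : O → ℕ) (pr : O → LinearOrder N)
    (p : N → LinearOrder O) (μ : N → O) : Prop :=
  ∃ (m : ℕ) (R : ℕ → Set (N × O)),
    R 0 = ∅ ∧
    (∀ t < m, daRej q pr p (R t) ≠ ∅ ∧ R (t + 1) = R t ∪ daRej q pr p (R t)) ∧
    daRej q pr p (R m) = ∅ ∧
    μ = fun i => daApp p (R m) i

end


noncomputable section AuxDA
open Classical

variable {N O : Type}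

lemma LO.lt_irrefl' {α : Type} (L : LinearOrder α) (a : α) : ¬ L.lt a a := by
  letI := L; exact lt_irrefl a

lemma LO.lt_trans' {α : Type} (L : LinearOrder α) {a b c : α} (h1 : L.lt a b)
    (h2 : L.lt b c) : L.lt a c := by
  letI := L; exact lt_trans h1 h2

lemma LO.lt_of_le_of_ne' {α : Type} (L : LinearOrder α) {a b : α} (h : L.le a b)
    (h2 : a ≠ b) : L.lt a b := by
  letI := L; exact lt_of_le_of_ne h h2

lemma LO.lt_asymm' {α : Type} (L : LinearOrder α) {a b : α} (h : L.lt a b) : ¬ L.lt b a := by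
  letI := L; exact lt_asymm h

lemma LO.eq_of_le_of_not_lt' {α : Type} (L : LinearOrder α) {a b : α} (h : L.le a b)
    (h2 : ¬ L.lt a b) : a = b := by
  letI := L; exact le_antisymm h (not_lt.mp h2)

lemma ncard_setOf_eq_filter {α : Type} [Fintype α] (P : α → Prop) [DecidablePred P] :
    Set.ncard {a | P a} = (Finset.univ.filter P).card := by
  rw [← Set.ncard_coe_finset]
  congr 1
  ext a
  simp

lemma max'_congr' {α : Type} (L : LinearOrder α) {A B : Finset α} (h : A = B)
    (hA : A.Nonempty) (hB : B.Nonempty) :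
    @Finset.max' α L A hA = @Finset.max' α L B hB := by subst h; rfl

/-- The set of schools that have not yet rejected `i`. -/
def filt [Fintype O] (R : Set (N × O)) (i : N) : Finset O :=
  Finset.univ.filter fun s : O => (i, s) ∉ R

lemma daApp_eq_dite [Fintype O] [Nonempty O] (p : N → LinearOrder O) (R : Set (N × O)) (i : N) :
    daApp p R i = if h : (filt R i).Nonempty then @Finset.max' O (p i) _ h
      else Classical.arbitrary O := rfl

lemma daApp_eq_max' [Fintype O] [Nonempty O] (p : N → LinearOrder O) (R : Set (N × O)) (i : N)
    {F : Finset O} (h : filt R i = F) (hF : F.Nonempty) :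
    daApp p R i = @Finset.max' O (p i) F hF := by
  subst h
  rw [daApp_eq_dite, dif_pos hF]

lemma daApp_congr' [Fintype O] [Nonempty O] (p : N → LinearOrder O) {R R' : Set (N × O)} (i : N)
    (h : filt R i = filt R' i) : daApp p R i = daApp p R' i := by
  by_cases hne : (filt R i).Nonempty
  · have hne' : (filt R' i).Nonempty := h ▸ hne
    rw [daApp_eq_max' p R i rfl hne, daApp_eq_max' p R' i rfl hne']
    exact max'_congr' (p i) h hne hne'
  · have hne' : ¬ (filt R' i).Nonempty := fun hn => hne (h.symm ▸ hn)
    rw [daApp_eq_dite, daApp_eq_dite, dif_neg hne, dif_neg hne']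

lemma bestLC_eq_max' [Fintype O] (pi : LinearOrder O) (a : O) (h : (LCfin pi a).Nonempty) :
    bestLC pi a = @Finset.max' O pi _ h := by
  unfold bestLC
  rw [dif_pos h]

lemma topq_card {α : Type} (L : LinearOrder α) (A : Finset α) (k : ℕ) (φ : α → ℕ)
    (hφ : ∀ j, φ j = (A.filter fun j' => L.lt j j').card) (hk : k ≤ A.card) :
    k ≤ (A.filter fun j => φ j < k).card := by
  classical
  letI := L
  have hlt : ∀ j ∈ A, φ j < A.card := by
    intro j hj
    have hsub : A.filter (fun j' => L.lt j j') ⊆ A.erase j := by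
      intro b hb
      rw [Finset.mem_filter] at hb
      rw [Finset.mem_erase]
      refine ⟨fun h => ?_, hb.1⟩
      exact absurd (h ▸ hb.2) (lt_irrefl j)
    have h1 : φ j ≤ (A.erase j).card := by
      rw [hφ]; exact Finset.card_le_card hsub
    have h2 := Finset.card_pos.mpr ⟨j, hj⟩
    rw [Finset.card_erase_of_mem hj] at h1
    omega
  have hmono : ∀ a b, b ∈ A → L.lt a b → φ b < φ a := by
    intro a b hbA hab
    rw [hφ, hφ]
    apply Finset.card_lt_card
    rw [Finset.ssubset_iff_of_subset]
    · exact ⟨b, Finset.mem_filter.mpr ⟨hbA, hab⟩, by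
        rw [Finset.mem_filter]; rintro ⟨-, h⟩; exact lt_irrefl b h⟩
    · intro c hc
      rw [Finset.mem_filter] at hc ⊢
      exact ⟨hc.1, lt_trans hab hc.2⟩
  have hinj : ∀ a ∈ A, ∀ b ∈ A, a ≠ b → φ a ≠ φ b := by
    intro a ha b hb hne
    rcases lt_trichotomy a b with h | h | h
    · exact (hmono a b hb h).ne'
    · exact absurd h hne
    · exact (hmono b a ha h).ne
  have hcard : (A.filter fun j => ¬ φ j < k).card ≤ (Finset.Ico k A.card).card := by
    apply Finset.card_le_card_of_injOn φ
    · intro j hj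
      rw [Finset.mem_coe, Finset.mem_filter] at hj
      rw [Finset.mem_coe, Finset.mem_Ico]
      exact ⟨not_lt.mp hj.2, hlt j hj.1⟩
    · intro a ha b hb he
      rw [Finset.mem_coe, Finset.mem_filter] at ha hb
      by_contra hne
      exact hinj a ha.1 b hb.1 hne he
  rw [Nat.card_Ico] at hcard
  have hsplit := Finset.card_filter_add_card_filter_not
    (s := A) (p := fun j => φ j < k)
  omega

end AuxDA

/-- Proposition 2: deferred acceptance for school choice is a local
priority mechanism, induced by the local compromiser assignment that makes `i` a
compromiser at `x` exactly when at least `q_{x i}` students with higher priority at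
`x i` are also assigned to `x i`. -/
theorem deferredAcceptance_isLocalPriority
    {N O : Type} [Fintype N] [Fintype O] [Nonempty O]
    (q : O → ℕ) (pr : O → LinearOrder N)
    (hq : Fintype.card N ≤ ∑ s : O, q s)
    (DA : (N → LinearOrder O) → N → O)
    (hDA : ∀ p, DARuns q pr p (DA p)) :
    lpInduces (SchoolC q)
      (fun x => {i : N | q (x i) ≤ Set.ncard {j : N | x j = x i ∧ (pr (x i)).lt i j}})
      DA := by
  classical
  set Cq : Set (N → O) := SchoolC q with hCq
  set αf : (N → O) → Set N :=
    (fun x => {i : N | q (x i) ≤ Set.ncard {j : N | x j = x i ∧ (pr (x i)).lt i j}}) with hαf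
  have hLCA : IsLCA Cq αf := by
    intro x
    constructor
    · -- infeasible ⇒ some compromiser
      intro hx
      simp only [hCq, SchoolC, Set.mem_setOf_eq, not_forall, not_le] at hx
      obtain ⟨s, hs⟩ := hx
      rw [ncard_setOf_eq_filter] at hs
      set A : Finset N := Finset.univ.filter (fun i => x i = s) with hA
      have hAne : A.Nonempty := Finset.card_pos.mp (by omega)
      set i : N := @Finset.min' N (pr s) A hAne with hi
      have hiA : i ∈ A := @Finset.min'_mem N (pr s) A hAne
      have hxi : x i = s := (Finset.mem_filter.mp hiA).2
      refine ⟨i, ?_⟩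
      simp only [hαf, Set.mem_setOf_eq, hxi]
      rw [ncard_setOf_eq_filter]
      have hsub : A.erase i ⊆ Finset.univ.filter fun j => x j = s ∧ (pr s).lt i j := by
        intro j hj
        have h1 := Finset.mem_erase.mp hj
        refine Finset.mem_filter.mpr
          ⟨Finset.mem_univ _, (Finset.mem_filter.mp h1.2).2, ?_⟩
        exact LO.lt_of_le_of_ne' (pr s) (@Finset.min'_le N (pr s) A j h1.2) (Ne.symm h1.1)
      have hc1 : (A.erase i).card ≤
          (Finset.univ.filter fun j => x j = s ∧ (pr s).lt i j).card :=
        Finset.card_le_card hsub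
      rw [Finset.card_erase_of_mem hiA] at hc1
      convert (show q s ≤ (Finset.univ.filter fun j => x j = s ∧ (pr s).lt i j).card by omega)
    · -- feasible ⇒ no compromiser
      intro hx
      ext i
      simp only [hαf, Set.mem_setOf_eq, Set.mem_empty_iff_false, iff_false, not_le]
      have h1 := hx (x i)
      rw [ncard_setOf_eq_filter] at h1
      rw [ncard_setOf_eq_filter]
      have hnot : i ∉ Finset.univ.filter fun j => x j = x i ∧ (pr (x i)).lt i j := by
        rw [Finset.mem_filter]
        rintro ⟨-, -, h⟩
        exact LO.lt_irrefl' (pr (x i)) i h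
      have hsub : insert i (Finset.univ.filter fun j => x j = x i ∧ (pr (x i)).lt i j) ⊆
          Finset.univ.filter fun j => x j = x i := by
        intro j hj
        rcases Finset.mem_insert.mp hj with rfl | hj
        · simp
        · rw [Finset.mem_filter] at hj ⊢
          exact ⟨hj.1, hj.2.1⟩
      have hc1 := Finset.card_le_card hsub
      rw [Finset.card_insert_of_notMem hnot] at hc1
      omega
  refine ⟨hLCA, ?_⟩
  intro p
  obtain ⟨m, R, hR0, hstep, hstop, hμ⟩ := hDA p
  -- membership in αf versus current rejection
  have hαD : ∀ (t : ℕ) (k : N), k ∈ αf (fun j => daApp p (R t) j) ↔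
      (k, daApp p (R t) k) ∈ daRej q pr p (R t) := by
    intro t k
    constructor
    · intro h
      exact ⟨rfl, h⟩
    · intro h
      exact h.2
  have hDk : ∀ (t : ℕ) (k : N) (s : O), (k, s) ∈ daRej q pr p (R t) →
      daApp p (R t) k = s := fun t k s h => h.1
  -- if a compromiser's application is rejected, her lower contour set is nonempty
  have hcount : ∀ t : ℕ, (∀ i, (filt (R t) i).Nonempty) →
      (∀ i s, (i, s) ∈ R t → q s ≤ (Finset.univ.filter fun j => daApp p (R t) j = s).card) →
      ∀ k, (k, daApp p (R t) k) ∈ daRej q pr p (R t) →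
      (LCfin (p k) (daApp p (R t) k)).Nonempty := by
    intro t inv1 inv3 k hk
    by_contra hemp
    rw [Finset.not_nonempty_iff_eq_empty] at hemp
    have hmin : ∀ b, ¬ (p k).lt b (daApp p (R t) k) := by
      intro b hb
      have hbm : b ∈ LCfin (p k) (daApp p (R t) k) := by
        rw [LCfin, Finset.mem_filter]
        exact ⟨Finset.mem_univ _, hb⟩
      rw [hemp] at hbm
      exact absurd hbm (Finset.notMem_empty b)
    have hrej : ∀ s', s' ≠ daApp p (R t) k → (k, s') ∈ R t := by
      intro s' hs'
      by_contra hR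
      have hmem : s' ∈ filt (R t) k := by
        rw [filt, Finset.mem_filter]
        exact ⟨Finset.mem_univ _, hR⟩
      have hle : (p k).le s' (daApp p (R t) k) := by
        rw [daApp_eq_max' p (R t) k rfl (inv1 k)]
        exact @Finset.le_max' O (p k) _ s' hmem
      exact hs' (LO.eq_of_le_of_not_lt' (p k) hle (hmin s'))
    have hsum : ∑ s : O, (Finset.univ.filter fun j => daApp p (R t) j = s).card
        = Fintype.card N := by
      rw [← Finset.card_univ]
      convert (Finset.card_eq_sum_card_fiberwise (f := fun j => daApp p (R t) j)
        (t := (Finset.univ : Finset O)) (fun j _ => Finset.mem_univ _)).symm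
    have hqsk : q (daApp p (R t) k) + 1 ≤
        (Finset.univ.filter fun j => daApp p (R t) j = daApp p (R t) k).card := by
      have h2 : q (daApp p (R t) k) ≤ Set.ncard {j : N | daApp p (R t) j = daApp p (R t) k ∧
          (pr (daApp p (R t) k)).lt k j} := hk.2
      rw [ncard_setOf_eq_filter] at h2
      have hnot : k ∉ Finset.univ.filter fun j =>
          daApp p (R t) j = daApp p (R t) k ∧ (pr (daApp p (R t) k)).lt k j := by
        rw [Finset.mem_filter]
        rintro ⟨-, -, h⟩
        exact LO.lt_irrefl' _ k h
      have hsub : insert k (Finset.univ.filter fun j =>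
          daApp p (R t) j = daApp p (R t) k ∧ (pr (daApp p (R t) k)).lt k j) ⊆
          Finset.univ.filter fun j => daApp p (R t) j = daApp p (R t) k := by
        intro j hj
        rcases Finset.mem_insert.mp hj with rfl | hj
        · simp
        · rw [Finset.mem_filter] at hj ⊢
          exact ⟨hj.1, hj.2.1⟩
      have hc1 := Finset.card_le_card hsub
      rw [Finset.card_insert_of_notMem hnot] at hc1
      omega
    have hlt : ∑ s : O, q s < ∑ s : O, (Finset.univ.filter fun j => daApp p (R t) j = s).card := by
      apply Finset.sum_lt_sum
      · intro s' _
        by_cases h : s' = daApp p (R t) k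
        · subst h; omega
        · exact inv3 k s' (hrej s' h)
      · exact ⟨daApp p (R t) k, Finset.mem_univ _, by omega⟩
    omega
  -- filter evolution for non-rejected students
  have hfiltsame : ∀ t : ℕ, t < m → ∀ k, (k, daApp p (R t) k) ∉ daRej q pr p (R t) →
      filt (R (t + 1)) k = filt (R t) k := by
    intro t ht k hk
    ext b
    simp only [filt, Finset.mem_filter, Finset.mem_univ, true_and, (hstep t ht).2,
      Set.mem_union]
    constructor
    · intro h hb
      exact h (Or.inl hb)
    · intro h hb
      rcases hb with hb | hb
      · exact h hb
      · have e := hDk t k b hb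
        subst e
        exact hk hb
  -- filter evolution for rejected students
  have hfiltrej : ∀ t : ℕ, t < m → (∀ i, (filt (R t) i).Nonempty) →
      (∀ i s, (i, s) ∈ R t → (p i).lt (daApp p (R t) i) s) →
      ∀ k, (k, daApp p (R t) k) ∈ daRej q pr p (R t) →
      filt (R (t + 1)) k = LCfin (p k) (daApp p (R t) k) := by
    intro t ht inv1 inv2 k hk
    ext b
    simp only [filt, LCfin, Finset.mem_filter, Finset.mem_univ, true_and, (hstep t ht).2,
      Set.mem_union]
    constructor
    · intro h
      push_neg at h
      obtain ⟨h1, h2⟩ := h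
      have hbne : b ≠ daApp p (R t) k := by
        rintro rfl
        exact h2 hk
      have hble : (p k).le b (daApp p (R t) k) := by
        rw [daApp_eq_max' p (R t) k rfl (inv1 k)]
        refine @Finset.le_max' O (p k) _ b ?_
        rw [filt, Finset.mem_filter]
        exact ⟨Finset.mem_univ _, h1⟩
      exact LO.lt_of_le_of_ne' (p k) hble hbne
    · intro hb
      rintro (hbR | hbD)
      · exact LO.lt_asymm' (p k) hb (inv2 k b hbR)
      · have e := hDk t k b hbD
        rw [← e] at hb
        exact LO.lt_irrefl' (p k) _ hb
  -- capacity-filling preservation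
  have hpres : ∀ t : ℕ, t < m → ∀ s : O,
      q s ≤ (Finset.univ.filter fun j => daApp p (R t) j = s).card →
      q s ≤ (Finset.univ.filter fun j => daApp p (R (t + 1)) j = s).card := by
    intro t ht s hs
    have htop := topq_card (pr s) (Finset.univ.filter fun j => daApp p (R t) j = s) (q s)
      (fun j => ((Finset.univ.filter fun j => daApp p (R t) j = s).filter
        fun j' => (pr s).lt j j').card) (fun j => rfl) hs
    refine le_trans htop (Finset.card_le_card ?_)
    intro j hj
    rw [Finset.mem_filter] at hj
    obtain ⟨hjA, hjc⟩ := hj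
    rw [Finset.mem_filter] at hjA
    have hnotrej : (j, daApp p (R t) j) ∉ daRej q pr p (R t) := by
      intro hrej
      have h2 : q (daApp p (R t) j) ≤ Set.ncard {j' : N | daApp p (R t) j' = daApp p (R t) j ∧
          (pr (daApp p (R t) j)).lt j j'} := hrej.2
      rw [hjA.2] at h2
      rw [ncard_setOf_eq_filter] at h2
      beta_reduce at hjc
      rw [Finset.filter_filter] at hjc
      omega
    rw [Finset.mem_filter]
    refine ⟨Finset.mem_univ _, ?_⟩
    rw [daApp_congr' p j (hfiltsame t ht j hnotrej)]
    exact hjA.2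
  -- the three invariants of the DA rounds
  have key : ∀ t : ℕ, t ≤ m →
      (∀ i, (filt (R t) i).Nonempty) ∧
      (∀ i s, (i, s) ∈ R t → (p i).lt (daApp p (R t) i) s) ∧
      (∀ i s, (i, s) ∈ R t → q s ≤ (Finset.univ.filter fun j => daApp p (R t) j = s).card) := by
    intro t
    induction t with
    | zero =>
      intro _
      refine ⟨fun i => ?_, fun i s h => ?_, fun i s h => ?_⟩
      · refine ⟨Classical.arbitrary O, ?_⟩
        rw [filt, Finset.mem_filter, hR0]
        exact ⟨Finset.mem_univ _, Set.notMem_empty _⟩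
      · rw [hR0] at h
        exact absurd h (Set.notMem_empty _)
      · rw [hR0] at h
        exact absurd h (Set.notMem_empty _)
    | succ t ih =>
      intro ht
      have htm : t < m := ht
      obtain ⟨inv1, inv2, inv3⟩ := ih (Nat.le_of_lt htm)
      have inv1' : ∀ i, (filt (R (t + 1)) i).Nonempty := by
        intro i
        by_cases hi : (i, daApp p (R t) i) ∈ daRej q pr p (R t)
        · rw [hfiltrej t htm inv1 inv2 i hi]
          exact hcount t inv1 inv3 i hi
        · rw [hfiltsame t htm i hi]
          exact inv1 i
      refine ⟨inv1', ?_, ?_⟩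
      · intro i s hs
        rw [(hstep t htm).2, Set.mem_union] at hs
        by_cases hi : (i, daApp p (R t) i) ∈ daRej q pr p (R t)
        · have h1 : daApp p (R (t + 1)) i ∈ filt (R (t + 1)) i := by
            rw [daApp_eq_max' p (R (t + 1)) i rfl (inv1' i)]
            exact @Finset.max'_mem O (p i) _ _
          rw [hfiltrej t htm inv1 inv2 i hi, LCfin, Finset.mem_filter] at h1
          have hlt : (p i).lt (daApp p (R (t + 1)) i) (daApp p (R t) i) := h1.2
          rcases hs with hs | hs
          · exact LO.lt_trans' (p i) hlt (inv2 i s hs)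
          · have e := hDk t i s hs
            subst e
            exact hlt
        · rw [daApp_congr' p i (hfiltsame t htm i hi)]
          rcases hs with hs | hs
          · exact inv2 i s hs
          · exfalso
            have e := hDk t i s hs
            subst e
            exact hi hs
      · intro i s hs
        rw [(hstep t htm).2, Set.mem_union] at hs
        refine hpres t htm s ?_
        rcases hs with hs | hs
        · exact inv3 i s hs
        · have e := hDk t i s hs
          subst e
          have h2 : q (daApp p (R t) i) ≤
              Set.ncard {j : N | daApp p (R t) j = daApp p (R t) i ∧
                (pr (daApp p (R t) i)).lt i j} := hs.2
          rw [ncard_setOf_eq_filter] at h2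
          refine le_trans h2 (Finset.card_le_card ?_)
          intro j hj
          rw [Finset.mem_filter] at hj ⊢
          exact ⟨hj.1, hj.2.1⟩
  -- assemble the run of the local priority algorithm
  refine ⟨m, fun t j => daApp p (R t) j, ?_, ?_, ?_, ?_⟩
  · funext i
    show daApp p (R 0) i = tau1 p i
    have hfe : filt (R 0) i = (Finset.univ : Finset O) := by
      ext b
      rw [filt, Finset.mem_filter, hR0]
      simp
    rw [daApp_eq_max' p (R 0) i hfe Finset.univ_nonempty]
    rfl
  · intro t ht
    obtain ⟨inv1, inv2, inv3⟩ := key t (Nat.le_of_lt ht)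
    have hne := (hstep t ht).1
    obtain ⟨ks, hk0⟩ := Set.nonempty_iff_ne_empty.mpr hne
    obtain ⟨k0, s0⟩ := ks
    have e := hDk t k0 s0 hk0
    subst e
    have hk0α : k0 ∈ αf (fun j => daApp p (R t) j) := (hαD t k0).mpr hk0
    refine ⟨?_, ?_, ?_⟩
    · intro hC
      have hemp := (hLCA _).2 hC
      rw [hemp] at hk0α
      exact hk0α
    · intro i hi
      exact hcount t inv1 inv3 i ((hαD t i).mp hi)
    · funext k
      by_cases hk : (k, daApp p (R t) k) ∈ daRej q pr p (R t)
      · have hkα : k ∈ αf (fun j => daApp p (R t) j) := (hαD t k).mpr hk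
        show daApp p (R (t + 1)) k = lpStep αf p (fun j => daApp p (R t) j) k
        simp only [lpStep]
        rw [if_pos hkα]
        have hLCne := hcount t inv1 inv3 k hk
        rw [daApp_eq_max' p (R (t + 1)) k (hfiltrej t ht inv1 inv2 k hk) hLCne]
        exact (bestLC_eq_max' (p k) (daApp p (R t) k) hLCne).symm
      · have hkα : k ∉ αf (fun j => daApp p (R t) j) := fun h => hk ((hαD t k).mp h)
        show daApp p (R (t + 1)) k = lpStep αf p (fun j => daApp p (R t) j) k
        simp only [lpStep]
        rw [if_neg hkα]
        exact daApp_congr' p k (hfiltsame t ht k hk)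
  · exact hμ.symm
  · by_contra hC
    obtain ⟨i, hi⟩ := (hLCA (DA p)).1 hC
    rw [hμ] at hi
    have hmem := (hαD m i).mp hi
    rw [hstop] at hmem
    exact hmem
end

section
/- For the house allocation constraint and any initial ownership structure μ⁰, the top trading cycles mechanism TTC_{μ⁰} is a local priority mechanism: there exists an implementable local compromiser assignment α for the house allocation constraint with LP_α = TTC_{μ⁰}. -/
/- Common framework: constrained allocation, local priority mechanisms
   (Root & Ahn, "Local Priority Mechanisms"). Agents `N`, objects `O`.
   A strict preference is encoded as a `LinearOrder` on `O`, where
   `pi.lt b a` means `a` is strictly preferred to `b`. -/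

open Classical

noncomputable section

variable {N O : Type}

/-- The best element of a set `S` of objects under `pi` (junk value if `S` is empty). -/
def bestIn [Fintype O] [Nonempty O] (pi : LinearOrder O) (S : Set O) : O :=
  if h : (Finset.univ.filter fun o : O => o ∈ S).Nonempty
  then @Finset.max' O pi _ h else Classical.arbitrary O

/-- In top trading cycles with endowment `μ0`, a remaining agent `i` (the set of
remaining agents being `A`) points to the agent endowed with her favourite remaining
object. -/
def ttcPtr [Fintype O] [Nonempty O] (μ0 : N ≃ O) (p : N → LinearOrder O)
    (A : Set N) (i : N) : N :=
  μ0.symm (bestIn (p i) (μ0 '' A))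

/-- The top trading cycles algorithm with initial ownership `μ0` at profile `p`
terminates with allocation `x`: in each round the agents lying on a cycle of the
pointing map trade along the cycle (each receiving the object of the agent she points
to) and leave; this repeats until no agents remain. -/
def TTCRuns [Fintype O] [Nonempty O] (μ0 : N ≃ O) (p : N → LinearOrder O)
    (x : N → O) : Prop :=
  ∃ (m : ℕ) (A : ℕ → Set N),
    A 0 = Set.univ ∧ A m = ∅ ∧
    ∀ t < m,
      A (t + 1) = A t \ {i : N | i ∈ A t ∧ ∃ k > 0, (ttcPtr μ0 p (A t))^[k] i = i} ∧
      ∀ i ∈ A t, (∃ k > 0, (ttcPtr μ0 p (A t))^[k] i = i) →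
        x i = μ0 (ttcPtr μ0 p (A t) i)

end

section TTCaux

open Classical Function

namespace TTCaux
set_option linter.unusedSectionVars false

/-- generic periodicity of a point under a self-map -/
def per {β : Type} (f : β → β) (a : β) : Prop := ∃ k > 0, f^[k] a = a

lemma per_apply {β : Type} {f : β → β} {a : β} (h : per f a) : per f (f a) := by
  obtain ⟨k, hk, hka⟩ := h
  refine ⟨k, hk, ?_⟩
  have h1 : f^[k] (f a) = f (f^[k] a) := by
    rw [← Function.iterate_succ_apply, Function.iterate_succ_apply']
  rw [h1, hka]

lemma orbit_closed {β : Type} {P : β → Prop} {f : β → β}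
    (hcl : ∀ a, P a → P (f a)) {a : β} (ha : P a) : ∀ r, P (f^[r] a) := by
  intro r; induction r with
  | zero => simpa using ha
  | succ n ih => rw [Function.iterate_succ_apply']; exact hcl _ ih

lemma per_iterate {β : Type} {f : β → β} {a : β} (h : per f a) (r : ℕ) :
    per f (f^[r] a) :=
  orbit_closed (P := per f) (fun _ hb => per_apply hb) h r

lemma injective_of_forall_per {β : Type} {f : β → β} (h : ∀ a, per f a) :
    Function.Injective f := by
  intro a b hab
  obtain ⟨ka, hka, ha⟩ := h a
  obtain ⟨kb, hkb, hb⟩ := h b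
  have ha' : f^[ka * kb] a = a := by
    rw [Function.iterate_mul]; exact Function.iterate_fixed ha kb
  have hb' : f^[ka * kb] b = b := by
    rw [mul_comm, Function.iterate_mul]; exact Function.iterate_fixed hb ka
  have hpos : 0 < ka * kb := Nat.mul_pos hka hkb
  have key : ∀ c : β, f^[ka * kb] c = f^[ka * kb - 1] (f c) := by
    intro c
    conv_lhs => rw [show ka * kb = (ka * kb - 1) + 1 by omega]
    rw [Function.iterate_succ_apply]
  calc a = f^[ka * kb] a := ha'.symm
    _ = f^[ka * kb - 1] (f a) := key a
    _ = f^[ka * kb - 1] (f b) := by rw [hab]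
    _ = f^[ka * kb] b := (key b).symm
    _ = b := hb'

lemma pigeon {β : Type} [Finite β] (f : β → β) (a : β) :
    ∃ s t : ℕ, s < t ∧ f^[s] a = f^[t] a := by
  obtain ⟨s, t, hst, he⟩ := Finite.exists_ne_map_eq_of_infinite (fun k : ℕ => f^[k] a)
  rcases lt_or_gt_of_ne hst with h | h
  · exact ⟨s, t, h, he⟩
  · exact ⟨t, s, h, he.symm⟩

lemma exists_per_iterate {β : Type} [Finite β] (f : β → β) (a : β) :
    ∃ k, per f (f^[k] a) := by
  obtain ⟨s, t, hst, he⟩ := pigeon f a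
  refine ⟨s, t - s, by omega, ?_⟩
  rw [← Function.iterate_add_apply]
  rw [show t - s + s = t by omega]
  exact he.symm

lemma per_of_injective {β : Type} [Finite β] {f : β → β}
    (hf : Function.Injective f) (a : β) : per f a := by
  obtain ⟨s, t, hst, he⟩ := pigeon f a
  refine ⟨t - s, by omega, ?_⟩
  have : f^[s] (f^[t - s] a) = f^[s] a := by
    rw [← Function.iterate_add_apply]
    rw [show s + (t - s) = t by omega]
    exact he.symm
  exact hf.iterate s this

variable {N O : Type} [Fintype N] [Fintype O] [Nonempty O]

/-- the pointing map of an allocation: `i` points to the owner of `x i`. -/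
def ptr (μ0 : N ≃ O) (x : N → O) (i : N) : N := μ0.symm (x i)

/-- `i` lies on a cycle of the pointing map of `x`. -/
def cyc (μ0 : N ≃ O) (x : N → O) (i : N) : Prop := per (ptr μ0 x) i

/-- the local compromiser assignment: non-cyclic agents pointing at cyclic ones. -/
def alph (μ0 : N ≃ O) (x : N → O) : Set N :=
  {i | ¬ cyc μ0 x i ∧ cyc μ0 x (ptr μ0 x i)}

lemma cyc_ptr {μ0 : N ≃ O} {x : N → O} {i : N} (h : cyc μ0 x i) :
    cyc μ0 x (ptr μ0 x i) := per_apply h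

lemma bijective_of_allcyc (μ0 : N ≃ O) (x : N → O) (h : ∀ i, cyc μ0 x i) :
    Function.Bijective x := by
  have hinj : Function.Injective (ptr μ0 x) := injective_of_forall_per h
  have hx : Function.Injective x := by
    intro a b hab
    apply hinj
    show μ0.symm (x a) = μ0.symm (x b)
    rw [hab]
  exact (Fintype.bijective_iff_injective_and_card x).mpr ⟨hx, Fintype.card_congr μ0⟩

lemma allcyc_of_bijective (μ0 : N ≃ O) (x : N → O) (h : Function.Bijective x)
    (i : N) : cyc μ0 x i := by
  have hinj : Function.Injective (ptr μ0 x) := by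
    intro a b hab
    exact h.1 (μ0.symm.injective hab)
  exact per_of_injective hinj i

lemma alph_empty (μ0 : N ≃ O) (x : N → O) (h : Function.Bijective x) :
    alph μ0 x = ∅ := by
  rw [Set.eq_empty_iff_forall_notMem]
  intro i hi
  exact hi.1 (allcyc_of_bijective μ0 x h i)

lemma alph_nonempty (μ0 : N ≃ O) (x : N → O) (h : ¬ Function.Bijective x) :
    (alph μ0 x).Nonempty := by
  have hex0 : ∃ i, ¬ cyc μ0 x i := by
    by_contra hc; push_neg at hc; exact h (bijective_of_allcyc μ0 x hc)
  obtain ⟨i, hi⟩ := hex0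
  have hex : ∃ k, cyc μ0 x ((ptr μ0 x)^[k] i) := exists_per_iterate (ptr μ0 x) i
  have hn : cyc μ0 x ((ptr μ0 x)^[Nat.find hex] i) := Nat.find_spec hex
  have hn0 : Nat.find hex ≠ 0 := by
    intro h0; rw [h0] at hn; simp only [Function.iterate_zero_apply] at hn
    exact hi hn
  refine ⟨(ptr μ0 x)^[Nat.find hex - 1] i, ?_, ?_⟩
  · exact Nat.find_min hex (by omega)
  · rw [← Function.iterate_succ_apply' (ptr μ0 x) (Nat.find hex - 1) i]
    rw [show (Nat.find hex - 1).succ = Nat.find hex by omega]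
    exact hn

end TTCaux

end TTCaux
lemma bestLC_lt {O : Type} [Fintype O] {pi : LinearOrder O} {a : O}
    (h : (LCfin pi a).Nonempty) : pi.lt (bestLC pi a) a := by
  letI := pi
  have hm : bestLC pi a ∈ LCfin pi a := by
    rw [bestLC, dif_pos h]; exact Finset.max'_mem _ h
  exact (Finset.mem_filter.mp hm).2

lemma bestLC_le {O : Type} [Fintype O] {pi : LinearOrder O} {a b : O}
    (h : (LCfin pi a).Nonempty) (hb : pi.lt b a) : pi.le b (bestLC pi a) := by
  letI := pi
  rw [bestLC, dif_pos h]
  exact Finset.le_max' (LCfin pi a) b (Finset.mem_filter.mpr ⟨Finset.mem_univ b, hb⟩)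

lemma bestLC_dichotomy {O : Type} [Fintype O] {pi : LinearOrder O} {a b : O}
    (hb : pi.lt (bestLC pi a) b) : b = a ∨ pi.lt a b := by
  letI := pi
  by_cases h : (LCfin pi a).Nonempty
  · by_contra hc
    push_neg at hc
    obtain ⟨h1, h2⟩ := hc
    have h3 : pi.lt b a := lt_of_le_of_ne h2 h1
    exact absurd hb (not_lt.mpr (bestLC_le h h3))
  · rw [bestLC, dif_neg h] at hb; right; exact hb

lemma bestIn_mem {O : Type} [Fintype O] [Nonempty O] {pi : LinearOrder O}
    {S : Set O} (h : S.Nonempty) : bestIn pi S ∈ S := by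
  letI := pi
  obtain ⟨o, ho⟩ := h
  have hne : (Finset.univ.filter fun b : O => b ∈ S).Nonempty :=
    ⟨o, Finset.mem_filter.mpr ⟨Finset.mem_univ o, ho⟩⟩
  rw [bestIn, dif_pos hne]
  exact (Finset.mem_filter.mp (Finset.max'_mem _ hne)).2

lemma bestIn_le {O : Type} [Fintype O] [Nonempty O] {pi : LinearOrder O}
    {S : Set O} {o : O} (hne : S.Nonempty) (ho : o ∈ S) :
    pi.le o (bestIn pi S) := by
  letI := pi
  obtain ⟨o', ho'⟩ := hne
  have hf : (Finset.univ.filter fun b : O => b ∈ S).Nonempty :=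
    ⟨o', Finset.mem_filter.mpr ⟨Finset.mem_univ o', ho'⟩⟩
  rw [bestIn, dif_pos hf]
  exact Finset.le_max' (Finset.univ.filter fun b : O => b ∈ S) o (Finset.mem_filter.mpr ⟨Finset.mem_univ o, ho⟩)

lemma bestIn_univ {O : Type} [Fintype O] [Nonempty O] (pi : LinearOrder O) :
    bestIn pi (Set.univ : Set O) = topObj pi := by
  letI := pi
  apply le_antisymm
  · exact Finset.le_max' _ _ (Finset.mem_univ _)
  · exact bestIn_le (Set.univ_nonempty) (Set.mem_univ _)

namespace TTCaux

set_option linter.unusedSectionVars false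

variable {N O : Type} [Fintype N] [Fintype O] [Nonempty O]

lemma step_not_mem (μ0 : N ≃ O) (p : N → LinearOrder O) {x : N → O} {i : N}
    (h : i ∉ alph μ0 x) : lpStep (alph μ0) p x i = x i := by
  simp only [lpStep]
  rw [if_neg h]

lemma step_cyc (μ0 : N ≃ O) (p : N → LinearOrder O) {x : N → O} {i : N}
    (h : cyc μ0 x i) : lpStep (alph μ0) p x i = x i :=
  step_not_mem μ0 p (fun hm => hm.1 h)

lemma cyc_step (μ0 : N ≃ O) (p : N → LinearOrder O) {x : N → O} {i : N}
    (h : cyc μ0 x i) : cyc μ0 (lpStep (alph μ0) p x) i := by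
  have hiter : ∀ k, (ptr μ0 (lpStep (alph μ0) p x))^[k] i = (ptr μ0 x)^[k] i := by
    intro k; induction k with
    | zero => rfl
    | succ n ih =>
      rw [Function.iterate_succ_apply', Function.iterate_succ_apply', ih]
      have hc : cyc μ0 x ((ptr μ0 x)^[n] i) := per_iterate h n
      show μ0.symm (lpStep (alph μ0) p x _) = μ0.symm (x _)
      rw [step_cyc μ0 p hc]
  obtain ⟨k, hk, hki⟩ := h
  exact ⟨k, hk, by rw [hiter k]; exact hki⟩

/-- The running invariant of the local priority algorithm. -/
def Inv (μ0 : N ≃ O) (TTCp : N → O) (p : N → LinearOrder O) (x : N → O) : Prop :=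
  (∀ i b, (p i).lt (x i) b → cyc μ0 x (μ0.symm b)) ∧
  (∀ i, cyc μ0 x i → x i = TTCp i)

/-- Newly formed cycles receive their TTC objects. -/
lemma lemB (μ0 : N ≃ O) (p : N → LinearOrder O) (TTCp : N → O)
    (hrun : TTCRuns μ0 p TTCp) (x x' : N → O)
    (hkeep : ∀ f, cyc μ0 x f → x' f = x f)
    (hval : ∀ f, cyc μ0 x f → x f = TTCp f)
    (hkey : ∀ j b, (p j).lt (x' j) b → cyc μ0 x (μ0.symm b))
    {i : N} (hcyc' : cyc μ0 x' i) (hncyc : ¬ cyc μ0 x i) :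
    x' i = TTCp i := by
  obtain ⟨m, A, hA0, hAm, hstep⟩ := hrun
  set K : Set N := {j | cyc μ0 x' j ∧ ¬ cyc μ0 x j} with hK
  have hFc : ∀ f, cyc μ0 x f → cyc μ0 x (ptr μ0 x' f) := by
    intro f hf
    have h1 : ptr μ0 x' f = ptr μ0 x f := by
      show μ0.symm (x' f) = μ0.symm (x f)
      rw [hkeep f hf]
    rw [h1]; exact per_apply hf
  have hKc : ∀ j ∈ K, ptr μ0 x' j ∈ K := by
    intro j hj
    refine ⟨per_apply hj.1, ?_⟩
    intro hF
    apply hj.2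
    obtain ⟨k, hk, hkj⟩ := hj.1
    have horb : ∀ r, cyc μ0 x ((ptr μ0 x')^[r] (ptr μ0 x' j)) :=
      orbit_closed (P := cyc μ0 x) hFc hF
    have hj' : (ptr μ0 x')^[k - 1] (ptr μ0 x' j) = j := by
      rw [← Function.iterate_succ_apply (ptr μ0 x') (k - 1) j]
      rw [show (k - 1).succ = k by omega]
      exact hkj
    rw [← hj']; exact horb (k - 1)
  have hKorb : ∀ j ∈ K, ∀ k, (ptr μ0 x')^[k] j ∈ K := by
    intro j hj k
    exact orbit_closed (P := fun a => a ∈ K) (fun a ha => hKc a ha) hj k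
  have hx'eq : ∀ j, x' j = μ0 (ptr μ0 x' j) := by
    intro j
    show x' j = μ0 (μ0.symm (x' j))
    rw [Equiv.apply_symm_apply]
  have main : ∀ t, t ≤ m →
      (∀ j ∈ K, j ∈ A t → ∀ k, (ptr μ0 x')^[k] j ∈ A t) ∧
      (∀ j ∈ K, j ∉ A t → x' j = TTCp j) := by
    intro t
    induction t with
    | zero =>
      intro _
      constructor
      · intro j _ _ k; rw [hA0]; trivial
      · intro j _ hj; rw [hA0] at hj; exact absurd trivial hj
    | succ t ih =>
      intro ht
      obtain ⟨ih1, ih2⟩ := ih (by omega)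
      obtain ⟨hAs, hget⟩ := hstep t (by omega)
      set suc := ttcPtr μ0 p (A t) with hsuc
      have hsucmem : (A t).Nonempty → ∀ i, suc i ∈ A t := by
        intro hne i
        have h1 : (μ0 '' A t).Nonempty := hne.image μ0
        obtain ⟨a, haA, hae⟩ := bestIn_mem (pi := p i) h1
        show μ0.symm (bestIn (p i) (μ0 '' A t)) ∈ A t
        rw [← hae, Equiv.symm_apply_apply]
        exact haA
      -- core: a K-agent of the current round on a trading cycle points along `ptr x'`
      have hS' : ∀ w ∈ K, w ∈ A t → per suc w → suc w = ptr μ0 x' w := by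
        intro w hwK hwA hper
        have hne : (A t).Nonempty := ⟨w, hwA⟩
        have h1 : (μ0 '' A t).Nonempty := hne.image μ0
        have hpA : ptr μ0 x' w ∈ A t := by
          have h2 := ih1 w hwK hwA 1
          rwa [Function.iterate_one] at h2
        have hx'mem : x' w ∈ μ0 '' A t := ⟨ptr μ0 x' w, hpA, (hx'eq w).symm⟩
        have hle : (p w).le (x' w) (bestIn (p w) (μ0 '' A t)) := bestIn_le h1 hx'mem
        by_cases heq : bestIn (p w) (μ0 '' A t) = x' w
        · show μ0.symm (bestIn (p w) (μ0 '' A t)) = μ0.symm (x' w)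
          rw [heq]
        · exfalso
          have hlt : (p w).lt (x' w) (bestIn (p w) (μ0 '' A t)) := by
            letI := p w
            exact lt_of_le_of_ne hle (fun hh => heq hh.symm)
          have hF : cyc μ0 x (μ0.symm (bestIn (p w) (μ0 '' A t))) := hkey w _ hlt
          have hbA : μ0.symm (bestIn (p w) (μ0 '' A t)) ∈ A t := by
            obtain ⟨a, haA, hae⟩ := bestIn_mem (pi := p w) h1
            rw [← hae, Equiv.symm_apply_apply]; exact haA
          have hsw : suc w = μ0.symm (bestIn (p w) (μ0 '' A t)) := rfl
          have horb : ∀ s, cyc μ0 x (suc^[s] (suc w)) ∧ suc^[s] (suc w) ∈ A t ∧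
              per suc (suc^[s] (suc w)) := by
            intro s; induction s with
            | zero =>
              simp only [Function.iterate_zero_apply]
              exact ⟨by rw [hsw]; exact hF, by rw [hsw]; exact hbA, per_apply hper⟩
            | succ n ihn =>
              obtain ⟨hc, hA', hp'⟩ := ihn
              rw [Function.iterate_succ_apply']
              refine ⟨?_, hsucmem hne _, per_apply hp'⟩
              have hTf : TTCp (suc^[n] (suc w)) = μ0 (suc (suc^[n] (suc w))) :=
                hget _ hA' hp'
              have hptr : suc (suc^[n] (suc w)) = ptr μ0 x (suc^[n] (suc w)) := by
                have hxf : x (suc^[n] (suc w)) = TTCp (suc^[n] (suc w)) := hval _ hc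
                have h3 : μ0 (suc (suc^[n] (suc w))) = μ0 (ptr μ0 x (suc^[n] (suc w))) := by
                  rw [← hTf, ← hxf]
                  show x _ = μ0 (μ0.symm (x _))
                  rw [Equiv.apply_symm_apply]
                exact μ0.injective h3
              rw [hptr]
              exact per_apply hc
          obtain ⟨k, hk, hkw⟩ := hper
          have hwcyc : cyc μ0 x w := by
            have hww : suc^[k - 1] (suc w) = w := by
              rw [← Function.iterate_succ_apply suc (k - 1) w]
              rw [show (k - 1).succ = k by omega]
              exact hkw
            rw [← hww]; exact (horb (k - 1)).1
          exact hwK.2 hwcyc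
      constructor
      · intro j hjK hjA1 k
        rw [hAs] at hjA1
        have hjA : j ∈ A t := hjA1.1
        have hwK : (ptr μ0 x')^[k] j ∈ K := hKorb j hjK k
        have hwA : (ptr μ0 x')^[k] j ∈ A t := ih1 j hjK hjA k
        rw [hAs]
        refine ⟨hwA, ?_⟩
        intro hwrem
        have hperw : per suc ((ptr μ0 x')^[k] j) := hwrem.2
        have hQ : ∀ s, per suc ((ptr μ0 x')^[s] ((ptr μ0 x')^[k] j)) := by
          intro s; induction s with
          | zero => simpa using hperw
          | succ n ihn =>
            have hK' : (ptr μ0 x')^[n] ((ptr μ0 x')^[k] j) ∈ K := by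
              rw [← Function.iterate_add_apply]
              exact hKorb j hjK (n + k)
            have hA' : (ptr μ0 x')^[n] ((ptr μ0 x')^[k] j) ∈ A t := by
              rw [← Function.iterate_add_apply]
              exact ih1 j hjK hjA (n + k)
            have heq2 := hS' _ hK' hA' ihn
            rw [Function.iterate_succ_apply', ← heq2]
            exact per_apply ihn
        have hperj : per suc j := by
          obtain ⟨c, hc, hcj⟩ := hjK.1
          have hMj : (ptr μ0 x')^[c * (k + 1)] j = j := by
            rw [Function.iterate_mul]
            exact Function.iterate_fixed hcj (k + 1)
          have hge : k + 1 ≤ c * (k + 1) := Nat.le_mul_of_pos_left _ hc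
          have hj' : (ptr μ0 x')^[c * (k + 1) - k] ((ptr μ0 x')^[k] j) = j := by
            rw [← Function.iterate_add_apply]
            rw [show c * (k + 1) - k + k = c * (k + 1) by omega]
            exact hMj
          rw [← hj']
          exact hQ _
        exact hjA1.2 ⟨hjA, hperj⟩
      · intro j hjK hjA1
        by_cases hjA : j ∈ A t
        · have hrem : per suc j := by
            by_contra hnp
            apply hjA1
            rw [hAs]
            exact ⟨hjA, fun hmem => hnp hmem.2⟩
          have h1 := hget j hjA hrem
          have h2 : suc j = ptr μ0 x' j := hS' j hjK hjA hrem
          rw [h1, h2]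
          exact hx'eq j
        · exact ih2 j hjK hjA
  have hK1 : i ∈ K := ⟨hcyc', hncyc⟩
  have hK2 : i ∉ A m := by rw [hAm]; exact Set.notMem_empty i
  exact (main m le_rfl).2 i hK1 hK2

lemma inv_step (μ0 : N ≃ O) (p : N → LinearOrder O) (TTCp : N → O)
    (hrun : TTCRuns μ0 p TTCp) (x : N → O)
    (h : Inv μ0 TTCp p x) : Inv μ0 TTCp p (lpStep (alph μ0) p x) := by
  have key : ∀ i b, (p i).lt (lpStep (alph μ0) p x i) b → cyc μ0 x (μ0.symm b) := by
    intro i b hb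
    by_cases hi : i ∈ alph μ0 x
    · have hxi : lpStep (alph μ0) p x i = bestLC (p i) (x i) := by
        simp only [lpStep]; rw [if_pos hi]
      rw [hxi] at hb
      rcases bestLC_dichotomy hb with heq | hlt
      · rw [heq]; exact hi.2
      · exact h.1 i b hlt
    · rw [step_not_mem μ0 p hi] at hb
      exact h.1 i b hb
  constructor
  · intro i b hb
    exact cyc_step μ0 p (key i b hb)
  · intro i hi
    by_cases hc : cyc μ0 x i
    · rw [step_cyc μ0 p hc]
      exact h.2 i hc
    · exact lemB μ0 p TTCp hrun x _ (fun f hf => step_cyc μ0 p hf)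
        (fun f hf => h.2 f hf) key hi hc

lemma inv_init (μ0 : N ≃ O) (p : N → LinearOrder O) (TTCp : N → O)
    (hrun : TTCRuns μ0 p TTCp) : Inv μ0 TTCp p (tau1 p) := by
  constructor
  · intro i b hb
    exfalso
    letI := p i
    have hle : b ≤ topObj (p i) := Finset.le_max' _ b (Finset.mem_univ b)
    exact absurd hb (not_lt.mpr hle)
  · intro i hi
    obtain ⟨m, A, hA0, hAm, hstep⟩ := hrun
    rcases Nat.eq_zero_or_pos m with hm | hm
    · exfalso
      subst hm
      rw [hA0] at hAm
      have h1 : i ∈ (∅ : Set N) := hAm ▸ Set.mem_univ i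
      exact Set.notMem_empty i h1
    · obtain ⟨_, hget⟩ := hstep 0 hm
      have hfun : ttcPtr μ0 p (A 0) = ptr μ0 (tau1 p) := by
        funext j
        show μ0.symm (bestIn (p j) (μ0 '' A 0)) = μ0.symm (tau1 p j)
        rw [hA0, Set.image_univ, Equiv.range_eq_univ, bestIn_univ]
        rfl
      have hper : per (ttcPtr μ0 p (A 0)) i := by rw [hfun]; exact hi
      have hg := hget i (by rw [hA0]; trivial) hper
      rw [hg, hfun]
      show tau1 p i = μ0 (μ0.symm (tau1 p i))
      rw [Equiv.apply_symm_apply]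

lemma noFail_of_inv (μ0 : N ≃ O) (p : N → LinearOrder O) {TTCp : N → O} {x : N → O}
    (h : Inv μ0 TTCp p x) : lpNoFail (alph μ0) p x := by
  intro i hi
  by_contra hne
  rw [Finset.not_nonempty_iff_eq_empty] at hne
  have hall : ∀ b : O, ¬ (p i).lt b (x i) := by
    intro b hb
    have hm : b ∈ LCfin (p i) (x i) := Finset.mem_filter.mpr ⟨Finset.mem_univ b, hb⟩
    rw [hne] at hm
    exact absurd hm (Finset.notMem_empty b)
  have hcycall : ∀ j : N, cyc μ0 x j := by
    intro j
    by_cases hj : μ0 j = x i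
    · have h1 : μ0.symm (x i) = j := by rw [← hj, Equiv.symm_apply_apply]
      rw [← h1]; exact hi.2
    · have hlt : (p i).lt (x i) (μ0 j) := by
        letI := p i
        rcases lt_trichotomy (μ0 j) (x i) with h1 | h1 | h1
        · exact absurd h1 (hall _)
        · exact absurd h1 hj
        · exact h1
      have h2 := h.1 i (μ0 j) hlt
      rwa [Equiv.symm_apply_apply] at h2
  exact hi.1 (hcycall i)

/-- the potential function -/
def pot (p : N → LinearOrder O) (x : N → O) : ℕ := ∑ i, (LCfin (p i) (x i)).card

lemma pot_step_lt (μ0 : N ≃ O) (p : N → LinearOrder O) {TTCp : N → O} {x : N → O}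
    (h : Inv μ0 TTCp p x) (hx : ¬ Function.Bijective x) :
    pot p (lpStep (alph μ0) p x) < pot p x := by
  obtain ⟨i0, hi0⟩ := alph_nonempty μ0 x hx
  have hstrict : ∀ i ∈ alph μ0 x,
      (LCfin (p i) (lpStep (alph μ0) p x i)).card < (LCfin (p i) (x i)).card := by
    intro i hi
    have hne : (LCfin (p i) (x i)).Nonempty := noFail_of_inv μ0 p h i hi
    have hxi : lpStep (alph μ0) p x i = bestLC (p i) (x i) := by
      simp only [lpStep]; rw [if_pos hi]
    rw [hxi]
    apply Finset.card_lt_card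
    rw [Finset.ssubset_iff_of_subset]
    · refine ⟨bestLC (p i) (x i), ?_, ?_⟩
      · exact Finset.mem_filter.mpr ⟨Finset.mem_univ _, bestLC_lt hne⟩
      · intro hm
        have h2 := (Finset.mem_filter.mp hm).2
        letI := p i
        exact lt_irrefl _ h2
    · intro b hb
      have h2 := (Finset.mem_filter.mp hb).2
      letI := p i
      refine Finset.mem_filter.mpr ⟨Finset.mem_univ b, ?_⟩
      exact lt_trans h2 (bestLC_lt hne)
  apply Finset.sum_lt_sum
  · intro i _
    by_cases hi : i ∈ alph μ0 x
    · exact le_of_lt (hstrict i hi)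
    · rw [step_not_mem μ0 p hi]
  · exact ⟨i0, Finset.mem_univ i0, hstrict i0 hi0⟩

lemma runs (μ0 : N ≃ O) (p : N → LinearOrder O) (TTCp : N → O)
    (hrun : TTCRuns μ0 p TTCp) :
    lpRunsTo {x : N → O | Function.Bijective x} (alph μ0) p TTCp := by
  set X : ℕ → N → O := fun k => (lpStep (alph μ0) p)^[k] (tau1 p) with hX
  have hX0 : X 0 = tau1 p := rfl
  have hXs : ∀ k, X (k + 1) = lpStep (alph μ0) p (X k) := by
    intro k
    show (lpStep (alph μ0) p)^[k + 1] (tau1 p) = _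
    rw [Function.iterate_succ_apply']
  have hinv : ∀ k, Inv μ0 TTCp p (X k) := by
    intro k; induction k with
    | zero => exact inv_init μ0 p TTCp hrun
    | succ n ih => rw [hXs]; exact inv_step μ0 p TTCp hrun _ ih
  have hex : ∃ k, Function.Bijective (X k) := by
    by_contra hc
    push_neg at hc
    have hdec : ∀ k, pot p (X (k + 1)) < pot p (X k) := by
      intro k; rw [hXs]; exact pot_step_lt μ0 p (hinv k) (hc k)
    have hb : ∀ k, pot p (X k) + k ≤ pot p (X 0) := by
      intro k; induction k with
      | zero => simp
      | succ n ih => have := hdec n; omega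
    have := hb (pot p (X 0) + 1)
    omega
  have hbij := Nat.find_spec hex
  have hXm : X (Nat.find hex) = TTCp := by
    funext j
    exact (hinv _).2 j (allcyc_of_bijective μ0 _ hbij j)
  refine ⟨Nat.find hex, X, hX0, ?_, hXm, ?_⟩
  · intro t ht
    refine ⟨Nat.find_min hex ht, noFail_of_inv μ0 p (hinv t), hXs t⟩
  · show Function.Bijective TTCp
    rw [← hXm]
    exact hbij

end TTCaux
/-- Proposition 3/TTC: for the house allocation constraint (the set
of bijective allocations) and any initial ownership structure `μ0`, the top trading
cycles mechanism is a local priority mechanism. -/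
theorem ttc_isLocalPriority
    {N O : Type} [Fintype N] [Fintype O] [Nonempty O]
    (μ0 : N ≃ O)
    (TTC : (N → LinearOrder O) → N → O)
    (hTTC : ∀ p, TTCRuns μ0 p (TTC p)) :
    ∃ α, lpInduces {x : N → O | Function.Bijective x} α TTC := by
  refine ⟨TTCaux.alph μ0, ?_, ?_⟩
  · intro x
    constructor
    · intro hx
      exact TTCaux.alph_nonempty μ0 x hx
    · intro hx
      exact TTCaux.alph_empty μ0 x hx
  · intro p
    exact TTCaux.runs μ0 p (TTC p) (hTTC p)
end

section
/- Fix a constraint C. If a local priority mechanism for C is group strategy-proof, then it is Pareto efficient. -/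
/- Common framework: constrained allocation, local priority mechanisms
   (Root & Ahn, "Local Priority Mechanisms"). Agents `N`, objects `O`.
   A strict preference is encoded as a `LinearOrder` on `O`, where
   `pi.lt b a` means `a` is strictly preferred to `b`. -/

open Classical

noncomputable def topOrder {O : Type} [Fintype O] (c : O) : LinearOrder O :=
  LinearOrder.lift'
    (fun b => if b = c then Fintype.card O else ((Fintype.equivFin O) b : ℕ))
    (by
      intro a b hab
      dsimp only at hab
      by_cases ha : a = c <;> by_cases hb : b = c
      · rw [ha, hb]
      · rw [if_pos ha, if_neg hb] at hab
        exact absurd hab.symm (Nat.ne_of_lt ((Fintype.equivFin O b).isLt))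
      · rw [if_neg ha, if_pos hb] at hab
        exact absurd hab (Nat.ne_of_lt ((Fintype.equivFin O a).isLt))
      · rw [if_neg ha, if_neg hb] at hab
        exact (Fintype.equivFin O).injective (Fin.val_injective hab))

lemma topObj_topOrder {O : Type} [Fintype O] [Nonempty O] (c : O) :
    topObj (topOrder c) = c := by
  have hle : ∀ b : O, (topOrder c).le b c := by
    intro b
    by_cases hb : b = c
    · rw [hb]
      exact (topOrder c).le_refl c
    · have hlt : (topOrder c).lt b c := by
        show (if b = c then Fintype.card O else ((Fintype.equivFin O) b : ℕ)) <
          (if c = c then Fintype.card O else ((Fintype.equivFin O) c : ℕ))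
        rw [if_neg hb, if_pos rfl]
        exact (Fintype.equivFin O b).isLt
      exact @le_of_lt O (topOrder c).toPreorder b c hlt
  refine (topOrder c).le_antisymm _ _ ?_ ?_
  · exact @Finset.max'_le O (topOrder c) Finset.univ Finset.univ_nonempty c
      (fun b _ => hle b)
  · exact @Finset.le_max' O (topOrder c) Finset.univ c (Finset.mem_univ c)

/-- Proposition 3, first part: if a local priority mechanism is
group strategy-proof, then it is Pareto efficient. -/
theorem gsp_localPriority_paretoEfficient
    {N O : Type} [Fintype N] [Fintype O] [Nonempty O]
    (C : Set (N → O)) (hC : C.Nonempty)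
    (f : (N → LinearOrder O) → N → O)
    (hlpm : ∃ α, lpInduces C α f) (hgsp : GSP f) :
    ParetoEff C f := by
  intro p h
  obtain ⟨ν, hνC, hweak, k, hk⟩ := h
  set p' : N → LinearOrder O := fun i => topOrder (ν i) with hp'
  have htau : tau1 p' = ν := funext fun i => topObj_topOrder (ν i)
  obtain ⟨α, hind, hrun⟩ := hlpm
  obtain ⟨m, x, hx0, hsteps, hxm, hfC⟩ := hrun p'
  have hfp' : f p' = ν := by
    rcases Nat.eq_zero_or_pos m with hm | hm
    · rw [← hxm, hm, hx0, htau]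
    · exact absurd (by rw [hx0, htau]; exact hνC) (hsteps 0 hm).1
  refine hgsp p p' Set.univ ⟨k, trivial⟩ (fun j hj => absurd (Set.mem_univ j) hj) ?_
  constructor
  · intro j _
    rw [hfp']
    exact hweak j
  · exact ⟨k, trivial, by rw [hfp']; exact hk⟩
end

section
/- There exist a finite agent set N with |N| = 3, an object set O with |O| = 3, a constraint C ⊆ O^N, and an implementable local compromiser assignment α for C such that the local priority mechanism LP_α is Pareto efficient but not group strategy-proof. -/
/- Common framework: constrained allocation, local priority mechanisms
   (Root & Ahn, "Local Priority Mechanisms"). Agents `N`, objects `O`.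
   A strict preference is encoded as a `LinearOrder` on `O`, where
   `pi.lt b a` means `a` is strictly preferred to `b`. -/

open Classical

/-! ### Auxiliary material for the example -/

namespace LPExample

noncomputable section

/-! #### Generic facts about linear orders on `Fin 3` -/

lemma fin3cases (z : Fin 3) : z = 0 ∨ z = 1 ∨ z = 2 := by omega

lemma pi_not_le (pi : LinearOrder (Fin 3)) {a b : Fin 3} (h : pi.lt a b) : ¬ pi.le b a :=
  ((pi.lt_iff_le_not_ge a b).mp h).2

lemma pi_lt_of_le_ne (pi : LinearOrder (Fin 3)) {a b : Fin 3} (h : pi.le a b) (hne : a ≠ b) :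
    pi.lt a b :=
  (pi.lt_iff_le_not_ge a b).mpr ⟨h, fun h' => hne (pi.le_antisymm a b h h')⟩

lemma pi_lt_irrefl (pi : LinearOrder (Fin 3)) (a : Fin 3) : ¬ pi.lt a a :=
  fun h => ((pi.lt_iff_le_not_ge a a).mp h).2 (pi.le_refl a)

lemma le_top (pi : LinearOrder (Fin 3)) (b : Fin 3) : pi.le b (topObj pi) :=
  @Finset.le_max' (Fin 3) pi Finset.univ b (Finset.mem_univ b)

lemma topObj_eq (pi : LinearOrder (Fin 3)) (a : Fin 3)
    (H : ∀ b, b ≠ a → pi.lt b a) : topObj pi = a := by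
  by_contra hne
  exact pi_not_le pi (H _ hne) (le_top pi a)

lemma mem_LCfin (pi : LinearOrder (Fin 3)) {a b : Fin 3} :
    b ∈ LCfin pi a ↔ pi.lt b a := by
  simp [LCfin]

lemma lc_top_nonempty (pi : LinearOrder (Fin 3)) : (LCfin pi (topObj pi)).Nonempty := by
  by_cases h : topObj pi = 0
  · exact ⟨1, (mem_LCfin pi).mpr (pi_lt_of_le_ne pi (le_top pi 1) (by rw [h]; decide))⟩
  · exact ⟨0, (mem_LCfin pi).mpr (pi_lt_of_le_ne pi (le_top pi 0) (fun e => h e.symm))⟩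

lemma bestLC_lt (pi : LinearOrder (Fin 3)) {a : Fin 3} (h : (LCfin pi a).Nonempty) :
    pi.lt (bestLC pi a) a := by
  rw [bestLC, dif_pos h]
  exact (mem_LCfin pi).mp (@Finset.max'_mem (Fin 3) pi _ h)

lemma bestLC_le (pi : LinearOrder (Fin 3)) {a b : Fin 3} (h : pi.lt b a) :
    pi.le b (bestLC pi a) := by
  have hne : (LCfin pi a).Nonempty := ⟨b, (mem_LCfin pi).mpr h⟩
  rw [bestLC, dif_pos hne]
  exact @Finset.le_max' (Fin 3) pi _ b ((mem_LCfin pi).mpr h)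

lemma bestLC_eq (pi : LinearOrder (Fin 3)) {a c : Fin 3} (hlt : pi.lt c a)
    (H : ∀ b, pi.lt b a → pi.le b c) : bestLC pi a = c := by
  have hne : (LCfin pi a).Nonempty := ⟨c, (mem_LCfin pi).mpr hlt⟩
  exact pi.le_antisymm _ _
    (by
      rw [bestLC, dif_pos hne]
      exact @Finset.max'_le (Fin 3) pi _ hne c (fun b hb => H b ((mem_LCfin pi).mp hb)))
    (bestLC_le pi hlt)

lemma wPref_top (pi : LinearOrder (Fin 3)) {a b : Fin 3} (htop : topObj pi = a)
    (h : wPref pi b a) : b = a := by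
  rcases h with h | h
  · exact h
  · exact absurd (htop ▸ le_top pi b) (pi_not_le pi h)

lemma wPref_best (pi : LinearOrder (Fin 3)) {a nu : Fin 3} (htop : topObj pi = a)
    (h : wPref pi nu (bestLC pi a)) : nu = a ∨ nu = bestLC pi a := by
  rcases h with h | h
  · exact Or.inr h
  · by_cases hn : nu = a
    · exact Or.inl hn
    · exact absurd (bestLC_le pi (pi_lt_of_le_ne pi (htop ▸ le_top pi nu) hn)) (pi_not_le pi h)

/-! #### Concrete linear orders from score vectors -/

def mkOrder (r : Fin 3 → Fin 3) (h : Function.Injective r) : LinearOrder (Fin 3) :=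
  LinearOrder.lift' r h

lemma mk_lt (r : Fin 3 → Fin 3) (h : Function.Injective r) (a b : Fin 3) :
    (mkOrder r h).lt a b ↔ r a < r b := Iff.rfl

lemma top_mk (r : Fin 3 → Fin 3) (h : Function.Injective r) (a : Fin 3)
    (H : ∀ b, b ≠ a → r b < r a) : topObj (mkOrder r h) = a :=
  topObj_eq _ _ (fun b hb => (mk_lt r h b a).mpr (H b hb))

lemma best_mk (r : Fin 3 → Fin 3) (h : Function.Injective r) (a c : Fin 3)
    (H1 : r c < r a) (H2 : ∀ b, r b < r a → r b ≤ r c) : bestLC (mkOrder r h) a = c :=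
  bestLC_eq _ ((mk_lt r h c a).mpr H1) (fun b hb => H2 b ((mk_lt r h b a).mp hb))

/-- The preference `0 ≻ 1 ≻ 2`. -/
def P012 : LinearOrder (Fin 3) := mkOrder ![2, 1, 0] (by decide)
/-- The preference `1 ≻ 0 ≻ 2`. -/
def P102 : LinearOrder (Fin 3) := mkOrder ![1, 2, 0] (by decide)
/-- The preference `1 ≻ 2 ≻ 0`. -/
def P120 : LinearOrder (Fin 3) := mkOrder ![0, 2, 1] (by decide)

lemma top_P012 : topObj P012 = 0 := top_mk _ _ _ (by decide)
lemma top_P102 : topObj P102 = 1 := top_mk _ _ _ (by decide)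
lemma top_P120 : topObj P120 = 1 := top_mk _ _ _ (by decide)
lemma best_P012 : bestLC P012 0 = 1 := best_mk _ _ _ _ (by decide) (by decide)
lemma best_P102 : bestLC P102 1 = 0 := best_mk _ _ _ _ (by decide) (by decide)

/-! #### The example -/

def c1 : Fin 3 → Fin 3 := ![0, 0, 0]
def c2 : Fin 3 → Fin 3 := ![0, 0, 1]
def c3 : Fin 3 → Fin 3 := ![0, 1, 1]
def c4 : Fin 3 → Fin 3 := ![0, 2, 1]

def Cset : Set (Fin 3 → Fin 3) := {x | x ≠ c1 ∧ x ≠ c2 ∧ x ≠ c3 ∧ x ≠ c4}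

def alph : (Fin 3 → Fin 3) → Set (Fin 3) := fun x =>
  if x = c1 then {1} else if x = c2 then {2} else if x = c3 then {0}
  else if x = c4 then {2} else ∅

def fex : (Fin 3 → LinearOrder (Fin 3)) → Fin 3 → Fin 3 := fun p =>
  if tau1 p = c1 then ![0, bestLC (p 1) 0, 0]
  else if tau1 p = c3 then ![bestLC (p 0) 0, 1, 1]
  else if tau1 p = c4 then ![0, 2, bestLC (p 2) 1]
  else if tau1 p = c2 then
    (if bestLC (p 2) 1 = 2 then ![0, 0, 2] else ![0, bestLC (p 1) 0, 0])
  else tau1 p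

lemma alph_c1 : alph c1 = {1} := by unfold alph; rw [if_pos rfl]
lemma alph_c2 : alph c2 = {2} := by
  unfold alph; rw [if_neg (by decide), if_pos rfl]
lemma alph_c3 : alph c3 = {0} := by
  unfold alph; rw [if_neg (by decide), if_neg (by decide), if_pos rfl]
lemma alph_c4 : alph c4 = {2} := by
  unfold alph; rw [if_neg (by decide), if_neg (by decide), if_neg (by decide), if_pos rfl]

lemma fex_c1 (p : Fin 3 → LinearOrder (Fin 3)) (h : tau1 p = c1) :
    fex p = ![0, bestLC (p 1) 0, 0] := by
  unfold fex; rw [if_pos h]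
lemma fex_c3 (p : Fin 3 → LinearOrder (Fin 3)) (h : tau1 p = c3) :
    fex p = ![bestLC (p 0) 0, 1, 1] := by
  unfold fex; rw [if_neg (by rw [h]; decide), if_pos h]
lemma fex_c4 (p : Fin 3 → LinearOrder (Fin 3)) (h : tau1 p = c4) :
    fex p = ![0, 2, bestLC (p 2) 1] := by
  unfold fex; rw [if_neg (by rw [h]; decide), if_neg (by rw [h]; decide), if_pos h]
lemma fex_c2_2 (p : Fin 3 → LinearOrder (Fin 3)) (h : tau1 p = c2)
    (hb : bestLC (p 2) 1 = 2) : fex p = ![0, 0, 2] := by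
  unfold fex
  rw [if_neg (by rw [h]; decide), if_neg (by rw [h]; decide), if_neg (by rw [h]; decide),
    if_pos h, if_pos hb]
lemma fex_c2_0 (p : Fin 3 → LinearOrder (Fin 3)) (h : tau1 p = c2)
    (hb : bestLC (p 2) 1 ≠ 2) : fex p = ![0, bestLC (p 1) 0, 0] := by
  unfold fex
  rw [if_neg (by rw [h]; decide), if_neg (by rw [h]; decide), if_neg (by rw [h]; decide),
    if_pos h, if_neg hb]
lemma fex_feas (p : Fin 3 → LinearOrder (Fin 3)) (h1 : tau1 p ≠ c1) (h2 : tau1 p ≠ c2)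
    (h3 : tau1 p ≠ c3) (h4 : tau1 p ≠ c4) : fex p = tau1 p := by
  unfold fex; rw [if_neg h1, if_neg h3, if_neg h4, if_neg h2]

end

end LPExample
namespace LPExample

lemma isLCA : IsLCA Cset alph := by
  intro x
  constructor
  · intro hx
    by_cases h1 : x = c1
    · subst h1; rw [alph_c1]; exact ⟨1, rfl⟩
    by_cases h2 : x = c2
    · subst h2; rw [alph_c2]; exact ⟨2, rfl⟩
    by_cases h3 : x = c3
    · subst h3; rw [alph_c3]; exact ⟨0, rfl⟩
    by_cases h4 : x = c4
    · subst h4; rw [alph_c4]; exact ⟨2, rfl⟩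
    exact absurd ⟨h1, h2, h3, h4⟩ hx
  · rintro ⟨h1, h2, h3, h4⟩
    unfold alph
    rw [if_neg h1, if_neg h2, if_neg h3, if_neg h4]

lemma bestLC_ne (pi : LinearOrder (Fin 3)) {a : Fin 3} (h : (LCfin pi a).Nonempty) :
    bestLC pi a ≠ a := by
  intro e
  have hlt := bestLC_lt pi h
  rw [e] at hlt
  exact pi_lt_irrefl pi a hlt

lemma runs (p : Fin 3 → LinearOrder (Fin 3)) : lpRunsTo Cset alph p (fex p) := by
  by_cases h1 : tau1 p = c1
  · -- one step, agent 1 compromises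
    have ht1 : topObj (p 1) = 0 := by have := congrFun h1 1; simpa [tau1, c1] using this
    have hlc : (LCfin (p 1) 0).Nonempty := by have hh := lc_top_nonempty (p 1); rwa [ht1] at hh
    have hs1 : bestLC (p 1) 0 ≠ 0 := bestLC_ne (p 1) hlc
    rw [fex_c1 p h1]
    refine ⟨1, fun t => match t with | 0 => tau1 p | _ => ![0, bestLC (p 1) 0, 0],
      rfl, ?_, rfl, ?_, ?_, ?_, ?_⟩
    · intro t ht
      have ht0 : t = 0 := by omega
      subst ht0
      refine ⟨?_, ?_, ?_⟩
      · show tau1 p ∉ Cset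
        rw [h1]; exact fun hm => hm.1 rfl
      · intro i hi
        have hi' : i ∈ alph (tau1 p) := hi
        rw [h1, alph_c1] at hi'
        have hieq : i = 1 := hi'
        subst hieq
        show (LCfin (p 1) (tau1 p 1)).Nonempty
        have hc : tau1 p 1 = 0 := by rw [h1]; decide
        rw [hc]; exact hlc
      · show ![0, bestLC (p 1) 0, 0] = lpStep alph p (tau1 p)
        rw [h1]
        funext k
        simp only [lpStep, alph_c1, Set.mem_singleton_iff]
        fin_cases k <;> simp [c1]
    · intro h; have := congrFun h 1; simp [c1] at this; exact hs1 this
    · intro h; have := congrFun h 2; simp [c2] at this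
    · intro h; have := congrFun h 2; simp [c3] at this
    · intro h; have := congrFun h 2; simp [c4] at this
  by_cases h3 : tau1 p = c3
  · -- one step, agent 0 compromises
    have ht0 : topObj (p 0) = 0 := by have := congrFun h3 0; simpa [tau1, c3] using this
    have hlc : (LCfin (p 0) 0).Nonempty := by have hh := lc_top_nonempty (p 0); rwa [ht0] at hh
    have hs0 : bestLC (p 0) 0 ≠ 0 := bestLC_ne (p 0) hlc
    rw [fex_c3 p h3]
    refine ⟨1, fun t => match t with | 0 => tau1 p | _ => ![bestLC (p 0) 0, 1, 1],
      rfl, ?_, rfl, ?_, ?_, ?_, ?_⟩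
    · intro t ht
      have ht0' : t = 0 := by omega
      subst ht0'
      refine ⟨?_, ?_, ?_⟩
      · show tau1 p ∉ Cset
        rw [h3]; exact fun hm => hm.2.2.1 rfl
      · intro i hi
        have hi' : i ∈ alph (tau1 p) := hi
        rw [h3, alph_c3] at hi'
        have hieq : i = 0 := hi'
        subst hieq
        show (LCfin (p 0) (tau1 p 0)).Nonempty
        have hc : tau1 p 0 = 0 := by rw [h3]; decide
        rw [hc]; exact hlc
      · show ![bestLC (p 0) 0, 1, 1] = lpStep alph p (tau1 p)
        rw [h3]
        funext k
        simp only [lpStep, alph_c3, Set.mem_singleton_iff]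
        fin_cases k <;> simp [c3]
    · intro h; have := congrFun h 1; simp [c1] at this
    · intro h; have := congrFun h 1; simp [c2] at this
    · intro h; have := congrFun h 0; simp [c3] at this; exact hs0 this
    · intro h; have := congrFun h 1; simp [c4] at this
  by_cases h4 : tau1 p = c4
  · -- one step, agent 2 compromises
    have ht2 : topObj (p 2) = 1 := by have := congrFun h4 2; simpa [tau1, c4] using this
    have hlc : (LCfin (p 2) 1).Nonempty := by have hh := lc_top_nonempty (p 2); rwa [ht2] at hh
    have hs2 : bestLC (p 2) 1 ≠ 1 := bestLC_ne (p 2) hlc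
    rw [fex_c4 p h4]
    refine ⟨1, fun t => match t with | 0 => tau1 p | _ => ![0, 2, bestLC (p 2) 1],
      rfl, ?_, rfl, ?_, ?_, ?_, ?_⟩
    · intro t ht
      have ht0' : t = 0 := by omega
      subst ht0'
      refine ⟨?_, ?_, ?_⟩
      · show tau1 p ∉ Cset
        rw [h4]; exact fun hm => hm.2.2.2 rfl
      · intro i hi
        have hi' : i ∈ alph (tau1 p) := hi
        rw [h4, alph_c4] at hi'
        have hieq : i = 2 := hi'
        subst hieq
        show (LCfin (p 2) (tau1 p 2)).Nonempty
        have hc : tau1 p 2 = 1 := by rw [h4]; decide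
        rw [hc]; exact hlc
      · show ![0, 2, bestLC (p 2) 1] = lpStep alph p (tau1 p)
        rw [h4]
        funext k
        simp only [lpStep, alph_c4, Set.mem_singleton_iff]
        fin_cases k <;> simp [c4]
    · intro h; have := congrFun h 1; simp [c1] at this
    · intro h; have := congrFun h 1; simp [c2] at this
    · intro h; have := congrFun h 1; simp [c3] at this
    · intro h; have := congrFun h 2; simp [c4] at this; exact hs2 this
  by_cases h2 : tau1 p = c2
  · -- agent 2 compromises; possibly then agent 1
    have ht2 : topObj (p 2) = 1 := by have := congrFun h2 2; simpa [tau1, c2] using this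
    have hlc2 : (LCfin (p 2) 1).Nonempty := by have hh := lc_top_nonempty (p 2); rwa [ht2] at hh
    have hs2 : bestLC (p 2) 1 ≠ 1 := bestLC_ne (p 2) hlc2
    have ht1 : topObj (p 1) = 0 := by have := congrFun h2 1; simpa [tau1, c2] using this
    have hlc1 : (LCfin (p 1) 0).Nonempty := by have hh := lc_top_nonempty (p 1); rwa [ht1] at hh
    have hs1 : bestLC (p 1) 0 ≠ 0 := bestLC_ne (p 1) hlc1
    by_cases hb : bestLC (p 2) 1 = 2
    · rw [fex_c2_2 p h2 hb]
      refine ⟨1, fun t => match t with | 0 => tau1 p | _ => ![0, 0, 2],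
        rfl, ?_, rfl, ?_, ?_, ?_, ?_⟩
      · intro t ht
        have ht0' : t = 0 := by omega
        subst ht0'
        refine ⟨?_, ?_, ?_⟩
        · show tau1 p ∉ Cset
          rw [h2]; exact fun hm => hm.2.1 rfl
        · intro i hi
          have hi' : i ∈ alph (tau1 p) := hi
          rw [h2, alph_c2] at hi'
          have hieq : i = 2 := hi'
          subst hieq
          show (LCfin (p 2) (tau1 p 2)).Nonempty
          have hc : tau1 p 2 = 1 := by rw [h2]; decide
          rw [hc]; exact hlc2
        · show ![0, 0, 2] = lpStep alph p (tau1 p)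
          rw [h2]
          funext k
          simp only [lpStep, alph_c2, Set.mem_singleton_iff]
          fin_cases k <;> simp [c2, hb]
      · intro h; have := congrFun h 2; simp [c1] at this
      · intro h; have := congrFun h 2; simp [c2] at this
      · intro h; have := congrFun h 1; simp [c3] at this
      · intro h; have := congrFun h 1; simp [c4] at this
    · have hb0 : bestLC (p 2) 1 = 0 := by
        rcases fin3cases (bestLC (p 2) 1) with h | h | h
        · exact h
        · exact absurd h hs2
        · exact absurd h hb
      rw [fex_c2_0 p h2 hb]
      refine ⟨2, fun t => match t with | 0 => tau1 p | 1 => c1 | _ => ![0, bestLC (p 1) 0, 0],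
        rfl, ?_, rfl, ?_, ?_, ?_, ?_⟩
      · intro t ht
        have ht01 : t = 0 ∨ t = 1 := by omega
        rcases ht01 with rfl | rfl
        · refine ⟨?_, ?_, ?_⟩
          · show tau1 p ∉ Cset
            rw [h2]; exact fun hm => hm.2.1 rfl
          · intro i hi
            have hi' : i ∈ alph (tau1 p) := hi
            rw [h2, alph_c2] at hi'
            have hieq : i = 2 := hi'
            subst hieq
            show (LCfin (p 2) (tau1 p 2)).Nonempty
            have hc : tau1 p 2 = 1 := by rw [h2]; decide
            rw [hc]; exact hlc2
          · show c1 = lpStep alph p (tau1 p)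
            rw [h2]
            funext k
            simp only [lpStep, alph_c2, Set.mem_singleton_iff]
            fin_cases k <;> simp [c1, c2, hb0]
        · refine ⟨?_, ?_, ?_⟩
          · show c1 ∉ Cset
            exact fun hm => hm.1 rfl
          · intro i hi
            have hi' : i ∈ alph c1 := hi
            rw [alph_c1] at hi'
            have hieq : i = 1 := hi'
            subst hieq
            show (LCfin (p 1) (c1 1)).Nonempty
            have hc : c1 1 = 0 := by decide
            rw [hc]; exact hlc1
          · show ![0, bestLC (p 1) 0, 0] = lpStep alph p c1
            funext k
            simp only [lpStep, alph_c1, Set.mem_singleton_iff]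
            fin_cases k <;> simp [c1]
      · intro h; have := congrFun h 1; simp [c1] at this; exact hs1 this
      · intro h; have := congrFun h 2; simp [c2] at this
      · intro h; have := congrFun h 2; simp [c3] at this
      · intro h; have := congrFun h 2; simp [c4] at this
  · -- the top allocation is feasible
    rw [fex_feas p h1 h2 h3 h4]
    exact ⟨0, fun _ => tau1 p, rfl, fun t ht => absurd ht (by omega), rfl, h1, h2, h3, h4⟩

end LPExample
namespace LPExample

lemma pareto : ParetoEff Cset fex := by
  rintro p ⟨nu, hnu, hw, k, hk⟩
  by_cases h1 : tau1 p = c1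
  · have ht0 : topObj (p 0) = 0 := by have := congrFun h1 0; simpa [tau1, c1] using this
    have ht1 : topObj (p 1) = 0 := by have := congrFun h1 1; simpa [tau1, c1] using this
    have ht2 : topObj (p 2) = 0 := by have := congrFun h1 2; simpa [tau1, c1] using this
    rw [fex_c1 p h1] at hw hk
    have e0 : nu 0 = 0 := wPref_top (p 0) ht0 (by simpa using hw 0)
    have e2 : nu 2 = 0 := wPref_top (p 2) ht2 (by simpa using hw 2)
    rcases wPref_best (p 1) ht1 (by simpa using hw 1) with e1 | e1
    · exact hnu.1 (by funext i; fin_cases i <;> simp [c1, e0, e1, e2])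
    · have hfeq : nu = ![0, bestLC (p 1) 0, 0] := by
        funext i; fin_cases i <;> simp [e0, e1, e2]
      rw [hfeq] at hk
      exact pi_lt_irrefl (p k) _ hk
  by_cases h3 : tau1 p = c3
  · have ht0 : topObj (p 0) = 0 := by have := congrFun h3 0; simpa [tau1, c3] using this
    have ht1 : topObj (p 1) = 1 := by have := congrFun h3 1; simpa [tau1, c3] using this
    have ht2 : topObj (p 2) = 1 := by have := congrFun h3 2; simpa [tau1, c3] using this
    rw [fex_c3 p h3] at hw hk
    have e1 : nu 1 = 1 := wPref_top (p 1) ht1 (by simpa using hw 1)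
    have e2 : nu 2 = 1 := wPref_top (p 2) ht2 (by simpa using hw 2)
    rcases wPref_best (p 0) ht0 (by simpa using hw 0) with e0 | e0
    · exact hnu.2.2.1 (by funext i; fin_cases i <;> simp [c3, e0, e1, e2])
    · have hfeq : nu = ![bestLC (p 0) 0, 1, 1] := by
        funext i; fin_cases i <;> simp [e0, e1, e2]
      rw [hfeq] at hk
      exact pi_lt_irrefl (p k) _ hk
  by_cases h4 : tau1 p = c4
  · have ht0 : topObj (p 0) = 0 := by have := congrFun h4 0; simpa [tau1, c4] using this
    have ht1 : topObj (p 1) = 2 := by have := congrFun h4 1; simpa [tau1, c4] using this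
    have ht2 : topObj (p 2) = 1 := by have := congrFun h4 2; simpa [tau1, c4] using this
    rw [fex_c4 p h4] at hw hk
    have e0 : nu 0 = 0 := wPref_top (p 0) ht0 (by simpa using hw 0)
    have e1 : nu 1 = 2 := wPref_top (p 1) ht1 (by simpa using hw 1)
    rcases wPref_best (p 2) ht2 (by simpa using hw 2) with e2 | e2
    · exact hnu.2.2.2 (by funext i; fin_cases i <;> simp [c4, e0, e1, e2])
    · have hfeq : nu = ![0, 2, bestLC (p 2) 1] := by
        funext i; fin_cases i <;> simp [e0, e1, e2]
      rw [hfeq] at hk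
      exact pi_lt_irrefl (p k) _ hk
  by_cases h2 : tau1 p = c2
  · have ht0 : topObj (p 0) = 0 := by have := congrFun h2 0; simpa [tau1, c2] using this
    have ht1 : topObj (p 1) = 0 := by have := congrFun h2 1; simpa [tau1, c2] using this
    have ht2 : topObj (p 2) = 1 := by have := congrFun h2 2; simpa [tau1, c2] using this
    have hlc2 : (LCfin (p 2) 1).Nonempty := by
      have hh := lc_top_nonempty (p 2); rwa [ht2] at hh
    have hs2 : bestLC (p 2) 1 ≠ 1 := bestLC_ne (p 2) hlc2
    by_cases hb : bestLC (p 2) 1 = 2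
    · rw [fex_c2_2 p h2 hb] at hw hk
      have e0 : nu 0 = 0 := wPref_top (p 0) ht0 (by simpa using hw 0)
      have e1 : nu 1 = 0 := wPref_top (p 1) ht1 (by simpa using hw 1)
      have hw2 : wPref (p 2) (nu 2) (bestLC (p 2) 1) := by rw [hb]; simpa using hw 2
      rcases wPref_best (p 2) ht2 hw2 with e2 | e2
      · exact hnu.2.1 (by funext i; fin_cases i <;> simp [c2, e0, e1, e2])
      · rw [hb] at e2
        have hfeq : nu = ![0, 0, 2] := by funext i; fin_cases i <;> simp [e0, e1, e2]
        rw [hfeq] at hk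
        exact pi_lt_irrefl (p k) _ hk
    · have hb0 : bestLC (p 2) 1 = 0 := by
        rcases fin3cases (bestLC (p 2) 1) with h | h | h
        · exact h
        · exact absurd h hs2
        · exact absurd h hb
      rw [fex_c2_0 p h2 hb] at hw hk
      have hlc1 : (LCfin (p 1) 0).Nonempty := by
        have hh := lc_top_nonempty (p 1); rwa [ht1] at hh
      have hs1 : bestLC (p 1) 0 ≠ 0 := bestLC_ne (p 1) hlc1
      have e0 : nu 0 = 0 := wPref_top (p 0) ht0 (by simpa using hw 0)
      have hw2 : wPref (p 2) (nu 2) (bestLC (p 2) 1) := by rw [hb0]; simpa using hw 2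
      rcases wPref_best (p 1) ht1 (by simpa using hw 1) with e1 | e1 <;>
        rcases wPref_best (p 2) ht2 hw2 with e2 | e2
      · exact hnu.2.1 (by funext i; fin_cases i <;> simp [c2, e0, e1, e2])
      · rw [hb0] at e2
        exact hnu.1 (by funext i; fin_cases i <;> simp [c1, e0, e1, e2])
      · rcases fin3cases (bestLC (p 1) 0) with hv | hv | hv
        · exact absurd hv hs1
        · refine hnu.2.2.1 (by funext i; fin_cases i <;> simp [c3, e0, e1, e2, hv])
        · refine hnu.2.2.2 (by funext i; fin_cases i <;> simp [c4, e0, e1, e2, hv])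
      · rw [hb0] at e2
        have hfeq : nu = ![0, bestLC (p 1) 0, 0] := by
          funext i; fin_cases i <;> simp [e0, e1, e2]
        rw [hfeq] at hk
        exact pi_lt_irrefl (p k) _ hk
  · rw [fex_feas p h1 h2 h3 h4] at hw hk
    have e : ∀ i, nu i = tau1 p i := fun i => wPref_top (p i) rfl (hw i)
    have hfeq : nu = tau1 p := funext e
    rw [hfeq] at hk
    exact pi_lt_irrefl (p k) _ hk

end LPExample
namespace LPExample
def pex : Fin 3 → LinearOrder (Fin 3) := ![P012, P012, P102]
def pex' : Fin 3 → LinearOrder (Fin 3) := ![P012, P102, P120]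

lemma pex0 : pex 0 = P012 := rfl
lemma pex1 : pex 1 = P012 := rfl
lemma pex2 : pex 2 = P102 := rfl
lemma pex'0 : pex' 0 = P012 := rfl
lemma pex'1 : pex' 1 = P102 := rfl
lemma pex'2 : pex' 2 = P120 := rfl
end LPExample
namespace LPExample
lemma tau_pex : tau1 pex = c2 := by
  funext i
  fin_cases i
  · show topObj (pex 0) = c2 0
    rw [pex0, top_P012]; rfl
  · show topObj (pex 1) = c2 1
    rw [pex1, top_P012]; rfl
  · show topObj (pex 2) = c2 2
    rw [pex2, top_P102]; rfl
end LPExample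
namespace LPExample
lemma tau_pex' : tau1 pex' = c3 := by
  funext i
  fin_cases i
  · show topObj (pex' 0) = c3 0
    rw [pex'0, top_P012]; rfl
  · show topObj (pex' 1) = c3 1
    rw [pex'1, top_P102]; rfl
  · show topObj (pex' 2) = c3 2
    rw [pex'2, top_P120]; rfl

lemma fex_pex : fex pex = ![0, 1, 0] := by
  have hb : bestLC (pex 2) 1 ≠ 2 := by
    rw [pex2, best_P102]; decide
  rw [fex_c2_0 pex tau_pex hb, pex1, best_P012]

lemma fex_pex' : fex pex' = ![1, 1, 1] := by
  rw [fex_c3 pex' tau_pex', pex'0, best_P012]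


end LPExample
namespace LPExample

lemma lt_P102 : P102.lt 0 1 := (mk_lt ![1,2,0] (by decide) 0 1).mpr (by decide)

lemma notGSP : ¬ GSP fex := by
  intro h
  refine h pex pex' {1, 2} ⟨1, Or.inl rfl⟩ ?_ ⟨?_, 2, Or.inr rfl, ?_⟩
  · intro j hj
    fin_cases j
    · exact pex'0.trans pex0.symm
    · exact absurd (Or.inl rfl) hj
    · exact absurd (Or.inr rfl) hj
  · intro j hj
    rw [fex_pex, fex_pex']
    rcases hj with rfl | hj
    · exact Or.inl rfl
    · have hj2 : j = 2 := hj
      subst hj2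
      refine Or.inr ?_
      show P102.lt 0 1
      exact lt_P102
  · rw [fex_pex, fex_pex']
    show P102.lt 0 1
    exact lt_P102

end LPExample

/-- Proposition 3, second part: there is a three-agent, three-object
constrained allocation problem and an implementable local compromiser assignment whose
local priority mechanism is Pareto efficient but not group strategy-proof. -/
theorem exists_paretoEfficient_not_gsp_localPriority :
    ∃ (C : Set (Fin 3 → Fin 3)) (α : (Fin 3 → Fin 3) → Set (Fin 3))
      (f : (Fin 3 → LinearOrder (Fin 3)) → Fin 3 → Fin 3),
      C.Nonempty ∧ lpInduces C α f ∧ ParetoEff C f ∧ ¬ GSP f := by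

  refine ⟨LPExample.Cset, LPExample.alph, LPExample.fex,
    ⟨![1, 1, 1], ?_, ?_, ?_, ?_⟩, ⟨LPExample.isLCA, LPExample.runs⟩,
    LPExample.pareto, LPExample.notGSP⟩ <;> decide
end
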